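/- arXiv:2507.02382 — 7 statements merged into one kernel-verified Lean document; each statement's English description precedes it below -/
import Mathlib

section
/- Every tame persistence module of finite type decomposes as a finite direct sum of half-open interval modules I_{[s_i, t_i)} (with t_i possibly infinite). -/
open CategoryTheory CategoryTheory.Limits NNReal
open scoped ENNReal

abbrev PMod := ℝ≥0 ⥤ ModuleCat ℚ

def Discretizes (V : PMod) (ts : Finset ℝ≥0) : Prop :=
  ∀ a b : ℝ≥0, ∀ h : a ≤ b, (¬ ∃ c ∈ ts, a < c ∧ c ≤ b) → IsIso (V.map (homOfLE h))

def Tame (V : PMod) : Prop := ∃ ts : Finset ℝ≥0, Discretizes V ts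

def IsInterval (V : PMod) (s : ℝ≥0∞) (t : ℝ≥0∞) : Prop :=
  (∀ r : ℝ≥0, s ≤ (r : ℝ≥0∞) → (r : ℝ≥0∞) < t → Module.finrank ℚ (V.obj r) = 1) ∧
  (∀ r : ℝ≥0, ¬ (s ≤ (r : ℝ≥0∞) ∧ (r : ℝ≥0∞) < t) → Subsingleton (V.obj r)) ∧
  (∀ a b : ℝ≥0, ∀ h : a ≤ b, s ≤ (a : ℝ≥0∞) → (b : ℝ≥0∞) < t →
    IsIso (V.map (homOfLE h)))

def FiniteType (V : PMod) : Prop := ∀ r : ℝ≥0, FiniteDimensional ℚ (V.obj r)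

attribute [local instance] CategoryTheory.Abelian.hasFiniteBiproducts

open scoped Classical


open Submodule Set
set_option linter.unusedSectionVars false

section Helpers

variable {M N : Type*} [AddCommGroup M] [Module ℚ M] [AddCommGroup N] [Module ℚ N]

lemma lmap_ext_src (h : Subsingleton M) (f g : M →ₗ[ℚ] N) : f = g := by
  ext x
  rw [Subsingleton.elim x 0, map_zero, map_zero]

lemma lmap_ext_tgt (h : Subsingleton N) (f g : M →ₗ[ℚ] N) : f = g := by
  ext x; exact Subsingleton.elim _ _

lemma sum_dite_zero {A : Type*} [Fintype A] (P : A → Prop) [DecidablePred P]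
    (f : ∀ b, P b → M) :
    (∑ b, if h : P b then f b h else 0) = ∑ b : {b // P b}, f b.1 b.2 := by
  calc (∑ b : A, if h : P b then f b h else 0)
      = ∑ b ∈ Finset.univ.filter P, (if h : P b then f b h else 0) :=
        (Finset.sum_subset (Finset.filter_subset _ _)
          (by intro b _ hb; simp only [Finset.mem_filter, Finset.mem_univ, true_and] at hb
              simp [hb])).symm
    _ = ∑ b : {b // P b}, (if h : P b.1 then f b.1 h else 0) :=
        Finset.sum_subtype _ (by simp) _
    _ = ∑ b : {b // P b}, f b.1 b.2 := Finset.sum_congr rfl (by intro j _; simp [j.2])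

lemma sum_eq_filter_dite {A : Type*} [Fintype A] (P : A → Prop) [DecidablePred P]
    (f : ∀ b, P b → M) :
    (∑ b, if h : P b then f b h else 0) = ∑ b : {b // P b}, f b.1 b.2 := sum_dite_zero P f

/-- linear independence of a family each of whose members is not in the span of earlier ones -/
lemma li_of_notMem_span_earlier {ι : Type*} (r : ι → ℕ) (hr : Function.Injective r)
    (x : ι → M) (h : ∀ i, x i ∉ Submodule.span ℚ (x '' {j | r j < r i})) :
    LinearIndependent ℚ x := by
  rw [linearIndependent_iff']
  suffices H : ∀ n (s : Finset ι), s.card = n → ∀ g : ι → ℚ,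
      (∑ i ∈ s, g i • x i = 0) → ∀ i ∈ s, g i = 0 by
    intro s g hs i hi; exact H s.card s rfl g hs i hi
  intro n
  induction n with
  | zero => intro s hs g _ i hi; simp [Finset.card_eq_zero.mp hs] at hi
  | succ n ih =>
    intro s hs g hsum i hi
    classical
    have hne : s.Nonempty := ⟨i, hi⟩
    -- pick element with maximal r
    obtain ⟨i₀, hi₀s, hi₀max⟩ :=
      s.exists_max_image r hne
    -- all others have r < r i₀
    have hlt : ∀ j ∈ s, j ≠ i₀ → r j < r i₀ := by
      intro j hj hne'
      exact lt_of_le_of_ne (hi₀max j hj) (fun hc => hne' (hr hc))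
    -- show g i₀ = 0
    have hg0 : g i₀ = 0 := by
      by_contra hg
      have hsum' : g i₀ • x i₀ + ∑ j ∈ s.erase i₀, g j • x j = 0 := by
        rw [add_comm, Finset.sum_erase_add s _ hi₀s]; exact hsum
      have h1 : g i₀ • x i₀ = -∑ j ∈ s.erase i₀, g j • x j :=
        eq_neg_of_add_eq_zero_left hsum'
      have hx : x i₀ = (-(g i₀)⁻¹) • ∑ j ∈ s.erase i₀, g j • x j := by
        rw [neg_smul, ← smul_neg, ← h1, smul_smul, inv_mul_cancel₀ hg, one_smul]
      have hmem : x i₀ ∈ Submodule.span ℚ (x '' {j | r j < r i₀}) := by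
        rw [hx]
        apply smul_mem
        apply sum_mem
        intro j hj
        apply smul_mem
        apply subset_span
        exact ⟨j, hlt j (Finset.mem_of_mem_erase hj) (Finset.ne_of_mem_erase hj), rfl⟩
      exact h i₀ hmem
    have hsum2 : ∑ j ∈ s.erase i₀, g j • x j = 0 := by
      have h2 := Finset.sum_erase_add s (fun j => g j • x j) hi₀s
      simp only [hg0, zero_smul, add_zero] at h2
      rw [h2]; exact hsum
    rcases eq_or_ne i i₀ with rfl | hne'
    · exact hg0
    · exact ih (s.erase i₀) (by rw [Finset.card_erase_of_mem hi₀s, hs]; rfl) g hsum2 i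
        (Finset.mem_erase.mpr ⟨hne', hi⟩)

lemma tri_span {ι : Type*} [Fintype ι] (r : ι → ℕ) (e f : ι → M) (C : ι → ι → ℚ)
    (hf : ∀ i, f i = e i + ∑ j, C i j • e j)
    (hC : ∀ i j, C i j ≠ 0 → r j < r i) :
    ∀ i, e i ∈ Submodule.span ℚ (Set.range f) := by
  suffices H : ∀ n i, r i < n → e i ∈ Submodule.span ℚ (Set.range f) by
    intro i; exact H (r i + 1) i (Nat.lt_succ_self _)
  intro n
  induction n with
  | zero => intro i hi; omega
  | succ n ih =>
    intro i hi
    have hsummem : ∑ j, C i j • e j ∈ Submodule.span ℚ (Set.range f) := by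
      apply sum_mem
      intro j _
      by_cases hj : C i j = 0
      · simp [hj]
      · exact smul_mem _ _ (ih j (by have := hC i j hj; omega))
    have he : e i = f i - ∑ j, C i j • e j := by rw [hf i]; abel
    rw [he]
    exact sub_mem (subset_span (Set.mem_range_self i)) hsummem

end Helpers

set_option linter.unusedSectionVars false

section Exchange

variable {M P : Type*} [AddCommGroup M] [Module ℚ M] [AddCommGroup P] [Module ℚ P]

lemma exchange {A : Type*} [Fintype A] (g : M →ₗ[ℚ] P) (u : A → M) (a : A → ℕ) :
    ∃ (c : A → A → ℚ) (r : A → ℕ),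
      (∀ b b', c b b' ≠ 0 → a b' ≤ a b ∧ r b' < r b) ∧
      LinearIndependent ℚ (fun b : {b : A // g (u b + ∑ b', c b b' • u b') ≠ 0} =>
        g (u b.1 + ∑ b', c b.1 b' • u b')) := by
  classical
  set n := Fintype.card A with hn
  set rk : A → ℕ := fun b => (Fintype.equivFin A b : ℕ) with hrk
  have hrklt : ∀ b, rk b < n + 1 := fun b => Nat.lt_succ_of_lt (Fin.is_lt _)
  set r : A → ℕ := fun b => (n + 1) * a b + rk b with hrdef
  have hrspec : ∀ b, r b / (n+1) = a b ∧ r b % (n+1) = rk b := by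
    intro b
    constructor
    · rw [hrdef]; simp only
      rw [Nat.mul_add_div (Nat.succ_pos n), Nat.div_eq_of_lt (hrklt b), add_zero]
    · rw [hrdef]; simp only
      rw [Nat.mul_add_mod, Nat.mod_eq_of_lt (hrklt b)]
  have hrinj : Function.Injective r := by
    intro b b' hbb
    have h1 := hrspec b; have h2 := hrspec b'
    have : rk b = rk b' := by rw [← h1.2, ← h2.2, hbb]
    exact (Fintype.equivFin A).injective (Fin.ext this)
  have hra : ∀ b b', r b' < r b → a b' ≤ a b := by
    intro b b' hbb
    have h1 := hrspec b; have h2 := hrspec b'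
    rw [← h1.1, ← h2.1]
    exact Nat.div_le_div_right (le_of_lt hbb)
  set x : A → P := fun b => g (u b) with hx
  set F : A → Submodule ℚ P := fun b => Submodule.span ℚ (x '' {b' | r b' < r b}) with hF
  -- coefficient choice
  have hchoice : ∀ b, x b ∈ F b →
      ∃ t : {b' // r b' < r b} → ℚ, ∑ j, t j • x j.1 = x b := by
    intro b hb
    rw [hF] at hb; simp only at hb
    rw [Set.image_eq_range] at hb
    rw [mem_span_range_iff_exists_fun] at hb
    exact hb
  set c : A → A → ℚ := fun b b' =>
    if hb : x b ∈ F b then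
      (if h : r b' < r b then -((hchoice b hb).choose ⟨b', h⟩) else 0)
    else 0 with hc
  have hcsupp : ∀ b b', c b b' ≠ 0 → a b' ≤ a b ∧ r b' < r b := by
    intro b b' hne
    rw [hc] at hne; simp only at hne
    by_cases hb : x b ∈ F b
    · rw [dif_pos hb] at hne
      by_cases h : r b' < r b
      · exact ⟨hra b b' h, h⟩
      · rw [dif_neg h] at hne; exact absurd rfl hne
    · rw [dif_neg hb] at hne; exact absurd rfl hne
  -- value of g (u' b)
  have hval : ∀ b, g (u b + ∑ b', c b b' • u b') = if x b ∈ F b then 0 else x b := by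
    intro b
    rw [map_add, map_sum]
    simp only [map_smul]
    by_cases hb : x b ∈ F b
    · rw [if_pos hb]
      have : ∀ b', c b b' • g (u b') =
          if h : r b' < r b then (-((hchoice b hb).choose ⟨b', h⟩)) • x b' else 0 := by
        intro b'
        rw [hc]; simp only
        rw [dif_pos hb]
        by_cases h : r b' < r b
        · rw [dif_pos h, dif_pos h]
        · rw [dif_neg h, dif_neg h, zero_smul]
      rw [Finset.sum_congr rfl (fun b' _ => this b')]
      rw [sum_dite_zero (fun b' => r b' < r b) (fun b' h => (-((hchoice b hb).choose ⟨b', h⟩)) • x b')]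
      have hspec := (hchoice b hb).choose_spec
      have hsum : ∑ j : {b' // r b' < r b}, (-((hchoice b hb).choose j)) • x j.1
          = -(x b) := by
        calc ∑ j : {b' // r b' < r b}, (-((hchoice b hb).choose j)) • x j.1
            = -∑ j : {b' // r b' < r b}, ((hchoice b hb).choose j) • x j.1 := by
              rw [← Finset.sum_neg_distrib]
              exact Finset.sum_congr rfl (fun j _ => neg_smul _ _)
          _ = -(x b) := by rw [hspec]
      rw [hsum]
      simp [hx]
    · rw [if_neg hb]
      have : ∀ b', c b b' • g (u b') = 0 := by
        intro b'
        rw [hc]; simp only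
        rw [dif_neg hb, zero_smul]
      rw [Finset.sum_congr rfl (fun b' _ => this b')]
      simp [hx]
  have hxval : ∀ (s' : {b : A // g (u b + ∑ b', c b b' • u b') ≠ 0}),
      g (u s'.1 + ∑ b', c s'.1 b' • u b') = x s'.1 := by
    intro s'
    rw [hval]
    rw [if_neg]
    intro hmem
    apply s'.2
    rw [hval, if_pos hmem]
  refine ⟨c, r, hcsupp, ?_⟩
  apply li_of_notMem_span_earlier (fun s => r s.1)
    (fun s s' hss => Subtype.ext (hrinj hss))
  intro s hs
  have hnotin : x s.1 ∉ F s.1 := by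
    intro hmem
    apply s.2
    rw [hval, if_pos hmem]
  apply hnotin
  have hsub : ((fun b : {b : A // g (u b + ∑ b', c b b' • u b') ≠ 0} =>
      g (u b.1 + ∑ b', c b.1 b' • u b')) '' {j | r j.1 < r s.1}) ⊆ x '' {b' | r b' < r s.1} := by
    rintro y ⟨s', hs', rfl⟩
    exact ⟨s'.1, hs', (hxval s').symm ▸ rfl⟩
  have hmem2 := span_mono hsub hs
  rw [hxval s] at hmem2
  exact hmem2

end Exchange

lemma sum_restrict {M : Type*} [AddCommGroup M] [Module ℚ M] {A : Type*} [Fintype A]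
    (P : A → Prop) [DecidablePred P] (f : A → M) (h : ∀ b, ¬ P b → f b = 0) :
    ∑ b, f b = ∑ j : {b // P b}, f j.1 := by
  rw [show (∑ b, f b) = ∑ b, (if hb : P b then f b else 0) from
    Finset.sum_congr rfl (fun b _ => by by_cases hb : P b <;> simp [hb, h b])]
  exact sum_dite_zero P (fun b _ => f b)

section Barcode

open scoped Classical

universe u

variable (W : ℕ → Type u) [∀ k, AddCommGroup (W k)] [∀ k, Module ℚ (W k)]
  (g : ∀ k, W k →ₗ[ℚ] W (k+1))

structure BarcodeData (N : ℕ) where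
  B : Type u
  fin : Fintype B
  a : B → ℕ
  d : B → ℕ
  v : B → ∀ k, W k
  had : ∀ b, a b < d b
  hdN : ∀ b, d b ≤ N + 1
  hzero : ∀ b k, ¬ (a b ≤ k ∧ k < d b) → v b k = 0
  compat : ∀ b k, a b ≤ k → k < N → g k (v b k) = v b (k+1)
  hli : ∀ k, k ≤ N → LinearIndependent ℚ (fun b : {b : B // a b ≤ k ∧ k < d b} => v b.1 k)
  hspan : ∀ k, k ≤ N →
    ⊤ ≤ Submodule.span ℚ (Set.range (fun b : {b : B // a b ≤ k ∧ k < d b} => v b.1 k))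

variable [∀ k, FiniteDimensional ℚ (W k)]

set_option maxHeartbeats 1000000 in
theorem bc_zero : Nonempty (BarcodeData W g 0) := by
  classical
  set bas := Module.finBasis ℚ (W 0) with hbas
  refine ⟨⟨ULift.{u} (Fin (Module.finrank ℚ (W 0))), inferInstance, fun _ => 0, fun _ => 1,
    fun b k => Nat.rec (motive := W) (bas b.down) (fun n _ => 0) k,
    fun _ => Nat.zero_lt_one, fun _ => le_refl 1, ?_, ?_, ?_, ?_⟩⟩
  · intro b k hk
    cases k with
    | zero => exact absurd ⟨le_refl 0, Nat.zero_lt_one⟩ hk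
    | succ n => rfl
  · intro b k _ hk; omega
  · intro k hk
    interval_cases k
    have := (bas.linearIndependent).comp
      (fun s : {b : ULift.{u} (Fin (Module.finrank ℚ (W 0))) // (0:ℕ) ≤ 0 ∧ (0:ℕ) < 1} =>
        s.1.down)
      (fun s s' h => Subtype.ext (ULift.ext _ _ h))
    simpa [Function.comp_def] using this
  · intro k hk
    interval_cases k
    intro x _
    have hx : x ∈ Submodule.span ℚ (Set.range bas) := by rw [Module.Basis.span_eq]; trivial
    refine span_mono ?_ hx
    rintro y ⟨b, rfl⟩
    exact ⟨⟨⟨b⟩, ⟨le_refl 0, Nat.zero_lt_one⟩⟩, rfl⟩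

set_option maxHeartbeats 1600000 in
theorem bc_succ (N : ℕ) (D : BarcodeData W g N) : Nonempty (BarcodeData W g (N+1)) := by
  classical
  letI := D.fin
  set A := {b : D.B // D.d b = N + 1} with hA
  set u : A → W N := fun b => D.v b.1 N with hu
  obtain ⟨c, r, hcr, hliX⟩ := exchange (g N) u (fun b => D.a b.1)
  set u' : A → W N := fun b => u b + ∑ b', c b b' • u b' with hu'
  set XS : {b : A // g N (u b + ∑ b', c b b' • u b') ≠ 0} → W (N+1) :=
    fun s => g N (u s.1 + ∑ b', c s.1 b' • u b') with hXS
  set RX : Set (W (N+1)) := Set.range XS with hRX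
  have hliset : LinearIndependent ℚ (fun y : RX => (y : W (N+1))) :=
    (linearIndepOn_id_range_iff (LinearIndependent.injective hliX)).mpr hliX
  set text : Set (W (N+1)) := LinearIndepOn.extend (K := ℚ) (v := id) hliset (Set.subset_univ RX) with htext
  have hRXsub : RX ⊆ text := LinearIndepOn.subset_extend (v := id) hliset _
  have hlitext : LinearIndependent ℚ (fun y : text => (y : W (N+1))) :=
    LinearIndepOn.linearIndepOn_extend (v := id) hliset _
  have hspantext : Set.univ ⊆ (↑(Submodule.span ℚ text) : Set (W (N+1))) := LinearIndepOn.subset_span_extend hliset (Set.subset_univ RX)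
  haveI hfintext : Finite text := hlitext.finite
  haveI : Finite ↥(text \ RX) := Finite.Set.subset text Set.diff_subset
  haveI : Fintype ↥(text \ RX) := Fintype.ofFinite _
  -- new data
  set C : D.B → D.B → ℚ := fun b b' =>
    if hb : D.d b = N+1 then if hb' : D.d b' = N+1 then c ⟨b, hb⟩ ⟨b', hb'⟩ else 0 else 0
    with hC
  have hCsupp : ∀ b b', C b b' ≠ 0 →
      D.a b' ≤ D.a b ∧ D.d b = N+1 ∧ D.d b' = N+1 := by
    intro b b' hne
    rw [hC] at hne; simp only at hne
    by_cases hb : D.d b = N+1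
    · rw [dif_pos hb] at hne
      by_cases hb' : D.d b' = N+1
      · rw [dif_pos hb'] at hne
        exact ⟨(hcr _ _ hne).1, hb, hb'⟩
      · rw [dif_neg hb'] at hne; exact absurd rfl hne
    · rw [dif_neg hb] at hne; exact absurd rfl hne
  set wtop : D.B → W (N+1) := fun b =>
    if hb : D.d b = N+1 then g N (u' ⟨b, hb⟩) else 0 with hwtop
  set dnew : D.B → ℕ := fun b =>
    if hb : D.d b = N+1 then (if g N (u' ⟨b, hb⟩) ≠ 0 then N+2 else N+1) else D.d b
    with hdnew
  have hdnew_ge : ∀ b, D.d b ≤ dnew b := by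
    intro b
    rw [hdnew]; simp only
    by_cases hb : D.d b = N+1
    · rw [dif_pos hb]; by_cases hS : g N (u' ⟨b, hb⟩) ≠ 0 <;> simp [hS, hb] <;> omega
    · rw [dif_neg hb]
  have hdnew_le : ∀ b, dnew b ≤ N + 2 := by
    intro b
    rw [hdnew]; simp only
    by_cases hb : D.d b = N+1
    · rw [dif_pos hb]; by_cases hS : g N (u' ⟨b, hb⟩) ≠ 0 <;> simp [hS]
    · rw [dif_neg hb]; have := D.hdN b; omega
  have hdnew_dead : ∀ b, D.d b ≠ N + 1 → dnew b = D.d b := by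
    intro b hb; rw [hdnew]; simp only [dif_neg hb]
  have hdnew_alive : ∀ b (hb : D.d b = N+1), dnew b = if g N (u' ⟨b, hb⟩) ≠ 0 then N+2 else N+1 := by
    intro b hb; rw [hdnew]; simp only [dif_pos hb]
  set w : D.B → ∀ k, W k := fun b k =>
    if hk : k = N + 1 then cast (congrArg W hk.symm) (wtop b)
    else (if D.a b ≤ k ∧ k < D.d b then D.v b k + ∑ b', C b b' • D.v b' k else 0)
    with hw
  have hw_top : ∀ b, w b (N+1) = wtop b := by
    intro b; rw [hw]; simp
  have hw_ne : ∀ b k, k ≠ N+1 →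
      w b k = (if D.a b ≤ k ∧ k < D.d b then D.v b k + ∑ b', C b b' • D.v b' k else 0) := by
    intro b k hk; rw [hw]; simp only [dif_neg hk]

  have hCalive : ∀ b b' k, C b b' ≠ 0 → D.a b ≤ k → k ≤ N →
      (D.a b' ≤ k ∧ k < D.d b') := by
    intro b b' k hC0 hak hkN
    obtain ⟨hle, hb, hb'⟩ := hCsupp b b' hC0
    exact ⟨le_trans hle hak, by omega⟩
  have hvN : ∀ (b : D.B) (hb : D.d b = N+1),
      D.v b N + ∑ b', C b b' • D.v b' N = u' ⟨b, hb⟩ := by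
    intro b hb
    have hsum : ∑ b' : D.B, C b b' • D.v b' N =
        ∑ b'' : {b' : D.B // D.d b' = N+1}, c ⟨b, hb⟩ b'' • u b'' := by
      rw [sum_restrict (fun b' => D.d b' = N+1) (fun b' => C b b' • D.v b' N)
        (by intro b' hb'; rw [hC]; simp only [dif_pos hb, dif_neg hb', zero_smul])]
      apply Finset.sum_congr rfl
      intro j _
      rw [hC]; simp only [dif_pos hb, dif_pos j.2]; rfl
    rw [hsum]
  have hw_alive : ∀ b k, k ≤ N → (D.a b ≤ k ∧ k < D.d b) →
      w b k = D.v b k + ∑ b', C b b' • D.v b' k := by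
    intro b k hk hcc
    rw [hw_ne b k (by omega), if_pos hcc]
  have hw_dead : ∀ b k, k ≠ N+1 → ¬(D.a b ≤ k ∧ k < D.d b) → w b k = 0 := by
    intro b k hk hcc
    rw [hw_ne b k hk, if_neg hcc]
  have halive_top : ∀ b : D.B, N+1 < dnew b →
      ∃ hb : D.d b = N+1, g N (u' ⟨b, hb⟩) ≠ 0 := by
    intro b h
    rw [hdnew] at h; simp only at h
    by_cases hb : D.d b = N+1
    · rw [dif_pos hb] at h
      refine ⟨hb, ?_⟩
      by_contra hS
      rw [if_neg (fun hne => hne hS)] at h; omega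
    · rw [dif_neg hb] at h
      have := D.hdN b; omega
  have hwtop_mem : ∀ b : D.B, N+1 < dnew b → wtop b ∈ text := by
    intro b h
    obtain ⟨hb, hS⟩ := halive_top b h
    apply hRXsub
    rw [hwtop]; simp only [dif_pos hb]
    exact ⟨⟨⟨b, hb⟩, hS⟩, rfl⟩
  -- new data
  set B' : Type u := D.B ⊕ ↥(text \ RX) with hB'
  set a' : B' → ℕ := Sum.elim D.a (fun _ => N+1) with ha'
  set d' : B' → ℕ := Sum.elim dnew (fun _ => N+2) with hd'
  set v' : B' → ∀ k, W k := fun x k =>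
    Sum.elim (fun b => w b k)
      (fun y : ↥(text \ RX) => if hk : k = N+1 then cast (congrArg W hk.symm) (y.1 : W (N+1)) else 0) x
    with hv'
  have hv'_inl : ∀ b k, v' (Sum.inl b) k = w b k := fun b k => rfl
  have hv'_inr_top : ∀ y, v' (Sum.inr y) (N+1) = (y.1 : W (N+1)) := by
    intro y; rw [hv']; simp
  have hv'_inr_ne : ∀ y k, k ≠ N+1 → v' (Sum.inr y) k = 0 := by
    intro y k hk; rw [hv']; simp [hk]
  -- the function into text at level N+1
  have hΦpf : ∀ (t : {x : B' // a' x ≤ N+1 ∧ N+1 < d' x}), v' t.1 (N+1) ∈ text := by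
    rintro ⟨x, hx⟩
    cases x with
    | inl b =>
      rw [hv'_inl, hw_top]
      exact hwtop_mem b hx.2
    | inr y =>
      rw [hv'_inr_top]
      exact y.2.1
  set Φ : {x : B' // a' x ≤ N+1 ∧ N+1 < d' x} → ↥text :=
    fun t => ⟨v' t.1 (N+1), hΦpf t⟩ with hΦ
  have hΦinj : Function.Injective Φ := by
    rintro ⟨x, hx⟩ ⟨x', hx'⟩ he
    have he' : v' x (N+1) = v' x' (N+1) := congrArg Subtype.val he
    apply Subtype.ext
    cases x with
    | inl b =>
      cases x' with
      | inl b' =>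
        obtain ⟨hb, hS⟩ := halive_top b hx.2
        obtain ⟨hb', hS'⟩ := halive_top b' hx'.2
        rw [hv'_inl, hv'_inl, hw_top, hw_top, hwtop] at he'
        simp only [dif_pos hb, dif_pos hb'] at he'
        have : (⟨⟨b, hb⟩, hS⟩ : {s : A // g N (u s + ∑ b'', c s b'' • u b'') ≠ 0}) =
            ⟨⟨b', hb'⟩, hS'⟩ := hliX.injective (by exact he')
        have h3 := congrArg (fun z => z.1.1) this
        simp only at h3
        exact congrArg Sum.inl h3
      | inr y =>
        exfalso
        obtain ⟨hb, hS⟩ := halive_top b hx.2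
        rw [hv'_inl, hw_top, hv'_inr_top, hwtop] at he'
        simp only [dif_pos hb] at he'
        apply y.2.2
        rw [← he']
        exact ⟨⟨⟨b, hb⟩, hS⟩, rfl⟩
    | inr y =>
      cases x' with
      | inl b' =>
        exfalso
        obtain ⟨hb', hS'⟩ := halive_top b' hx'.2
        rw [hv'_inr_top, hv'_inl, hw_top, hwtop] at he'
        simp only [dif_pos hb'] at he'
        apply y.2.2
        rw [he']
        exact ⟨⟨⟨b', hb'⟩, hS'⟩, rfl⟩
      | inr y' =>
        rw [hv'_inr_top, hv'_inr_top] at he'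
        exact congrArg Sum.inr (Subtype.ext he')
  have hΦsurj : Function.Surjective Φ := by
    rintro ⟨z, hz⟩
    by_cases hzRX : z ∈ RX
    · obtain ⟨s, hs⟩ := hzRX
      have hdn : dnew s.1.1 = N + 2 := by
        rw [hdnew_alive s.1.1 s.1.2]
        rw [if_pos]
        have : (⟨s.1.1, s.1.2⟩ : A) = s.1 := rfl
        rw [this]
        exact s.2
      refine ⟨⟨Sum.inl s.1.1, ⟨?_, ?_⟩⟩, ?_⟩
      · have := D.had s.1.1
        have := s.1.2
        simp only [ha', Sum.elim_inl]
        omega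
      · simp only [hd', Sum.elim_inl]
        omega
      · apply Subtype.ext
        simp only [hΦ]
        rw [hv'_inl, hw_top, hwtop]
        simp only [dif_pos s.1.2]
        have : (⟨s.1.1, s.1.2⟩ : A) = s.1 := rfl
        rw [this]
        exact hs
    · refine ⟨⟨Sum.inr ⟨z, ⟨hz, hzRX⟩⟩, ⟨le_refl _, by simp [hd']⟩⟩, ?_⟩
      apply Subtype.ext
      simp only [hΦ]
      rw [hv'_inr_top]
  -- basis of W (N+1) given by text
  have hspantext' : ⊤ ≤ Submodule.span ℚ (Set.range (fun y : text => (y : W (N+1)))) := by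
    rw [Subtype.range_coe]
    intro x _
    exact hspantext (Set.mem_univ x)
  -- span at level k ≤ N
  set R : D.B → ℕ := fun b => if hb : D.d b = N+1 then r ⟨b, hb⟩ else 0 with hR
  have hspan_le : ∀ k, k ≤ N →
      ⊤ ≤ Submodule.span ℚ (Set.range (fun t : {x : B' // a' x ≤ k ∧ k < d' x} => v' t.1 k)) := by
    intro k hkN
    have htri : ∀ s : {b : D.B // D.a b ≤ k ∧ k < D.d b},
        D.v s.1 k ∈ Submodule.span ℚ (Set.range
          (fun s : {b : D.B // D.a b ≤ k ∧ k < D.d b} => w s.1 k)) := by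
      apply tri_span (fun s => R s.1) _ _ (fun s j => C s.1 j.1)
      · intro s
        have hre : (∑ b' : D.B, C s.1 b' • D.v b' k) =
            ∑ j : {b : D.B // D.a b ≤ k ∧ k < D.d b}, C s.1 j.1 • D.v j.1 k :=
          sum_restrict _ _
            (by intro b' hb'
                by_cases hC0 : C s.1 b' = 0
                · rw [hC0, zero_smul]
                · exact absurd (hCalive s.1 b' k hC0 s.2.1 hkN) hb')
        rw [hw_alive s.1 k hkN s.2, hre]
      · intro s j hC0
        obtain ⟨_, hbs, hbj⟩ := hCsupp s.1 j.1 hC0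
        rw [hR]; simp only [dif_pos hbs, dif_pos hbj]
        have : c ⟨s.1, hbs⟩ ⟨j.1, hbj⟩ ≠ 0 := by
          rw [hC] at hC0; simp only [dif_pos hbs, dif_pos hbj] at hC0
          exact hC0
        exact (hcr _ _ this).2
    intro x hx
    have hxold : x ∈ Submodule.span ℚ (Set.range
        (fun s : {b : D.B // D.a b ≤ k ∧ k < D.d b} => D.v s.1 k)) := D.hspan k hkN hx
    have hle1 : Submodule.span ℚ (Set.range
        (fun s : {b : D.B // D.a b ≤ k ∧ k < D.d b} => D.v s.1 k)) ≤
        Submodule.span ℚ (Set.range (fun t : {x : B' // a' x ≤ k ∧ k < d' x} => v' t.1 k)) := by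
      rw [span_le]
      rintro y ⟨s, rfl⟩
      have hmem := htri s
      have hle2 : Submodule.span ℚ (Set.range
          (fun s : {b : D.B // D.a b ≤ k ∧ k < D.d b} => w s.1 k)) ≤
          Submodule.span ℚ (Set.range (fun t : {x : B' // a' x ≤ k ∧ k < d' x} => v' t.1 k)) := by
        rw [span_le]
        rintro z ⟨j, rfl⟩
        apply subset_span
        refine ⟨⟨Sum.inl j.1, ⟨j.2.1, lt_of_lt_of_le j.2.2 (hdnew_ge j.1)⟩⟩, rfl⟩
      exact hle2 hmem
    exact hle1 hxold
  -- card at level k ≤ N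
  have hcard_le : ∀ k, k ≤ N →
      Fintype.card {x : B' // a' x ≤ k ∧ k < d' x} = Module.finrank ℚ (W k) := by
    intro k hkN
    have hEbij : Function.Bijective
        (fun s : {b : D.B // D.a b ≤ k ∧ k < D.d b} =>
          (⟨Sum.inl s.1, ⟨s.2.1, lt_of_lt_of_le s.2.2 (hdnew_ge s.1)⟩⟩ :
            {x : B' // a' x ≤ k ∧ k < d' x})) := by
      constructor
      · rintro ⟨b, hb⟩ ⟨b', hb'⟩ he
        exact Subtype.ext (Sum.inl_injective (congrArg Subtype.val he))
      · rintro ⟨x, hx⟩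
        cases x with
        | inl b =>
          refine ⟨⟨b, ⟨hx.1, ?_⟩⟩, rfl⟩
          have h2 := hx.2
          simp only [hd', Sum.elim_inl] at h2
          by_cases hb : D.d b = N+1
          · omega
          · rw [hdnew_dead b hb] at h2; exact h2
        | inr y =>
          exfalso
          have h1 := hx.1
          simp only [ha', Sum.elim_inr] at h1
          omega
    have hb1 : Module.finrank ℚ (W k) =
        Fintype.card {b : D.B // D.a b ≤ k ∧ k < D.d b} :=
      Module.finrank_eq_card_basis (Module.Basis.mk (D.hli k hkN) (D.hspan k hkN))
    rw [hb1]
    exact (Fintype.card_congr (Equiv.ofBijective _ hEbij)).symm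
  -- span and card at level N+1
  have hspan_top : ⊤ ≤ Submodule.span ℚ (Set.range
      (fun t : {x : B' // a' x ≤ N+1 ∧ N+1 < d' x} => v' t.1 (N+1))) := by
    have hre : Set.range (fun t : {x : B' // a' x ≤ N+1 ∧ N+1 < d' x} => v' t.1 (N+1)) =
        text := by
      ext z
      constructor
      · rintro ⟨t, rfl⟩
        exact hΦpf t
      · intro hz
        obtain ⟨t, ht⟩ := hΦsurj ⟨z, hz⟩
        exact ⟨t, congrArg Subtype.val ht⟩
    rw [hre]
    intro x _
    exact hspantext (Set.mem_univ x)
  have hcard_top : Fintype.card {x : B' // a' x ≤ N+1 ∧ N+1 < d' x} =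
      Module.finrank ℚ (W (N+1)) := by
    haveI : Fintype ↥text := Fintype.ofFinite _
    have hb1 : Module.finrank ℚ (W (N+1)) = Fintype.card ↥text :=
      Module.finrank_eq_card_basis (Module.Basis.mk hlitext hspantext')
    rw [hb1]
    exact Fintype.card_congr (Equiv.ofBijective Φ ⟨hΦinj, hΦsurj⟩)
  -- assemble
  refine ⟨⟨B', inferInstance, a', d', v', ?_, ?_, ?_, ?_, ?_, ?_⟩⟩
  · intro x
    cases x with
    | inl b =>
      simp only [ha', hd', Sum.elim_inl]
      exact lt_of_lt_of_le (D.had b) (hdnew_ge b)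
    | inr y => simp [ha', hd']
  · intro x
    cases x with
    | inl b =>
      simp only [hd', Sum.elim_inl]
      exact hdnew_le b
    | inr y => simp [hd']
  · -- hzero
    intro x k hk
    cases x with
    | inl b =>
      by_cases hkN : k = N+1
      · subst hkN
        rw [hv'_inl, hw_top, hwtop]; simp only
        by_cases hb : D.d b = N+1
        · rw [dif_pos hb]
          by_contra hne
          apply hk
          constructor
          · simp only [ha', Sum.elim_inl]
            have := D.had b; omega
          · simp only [hd', Sum.elim_inl]
            rw [hdnew_alive b hb, if_pos hne]
            omega
        · rw [dif_neg hb]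
      · rw [hv'_inl, hw_ne b k hkN, if_neg]
        intro hcc
        apply hk
        simp only [ha', hd', Sum.elim_inl]
        exact ⟨hcc.1, lt_of_lt_of_le hcc.2 (hdnew_ge b)⟩
    | inr y =>
      by_cases hkN : k = N+1
      · subst hkN
        exfalso
        apply hk
        simp [ha', hd']
      · exact hv'_inr_ne y k hkN
  · -- compat
    intro x k hak hk1
    cases x with
    | inr y =>
      exfalso
      simp only [ha', Sum.elim_inr] at hak
      omega
    | inl b =>
      simp only [ha', Sum.elim_inl] at hak
      by_cases hkN : k = N
      · subst k
        by_cases hb : D.d b = N+1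
        · have halive : D.a b ≤ N ∧ N < D.d b := ⟨hak, by omega⟩
          rw [hv'_inl, hv'_inl, hw_alive b N (le_refl N) halive, hvN b hb, hw_top, hwtop]
          simp only [dif_pos hb]
        · have hd : D.d b ≤ N := by have := D.hdN b; omega
          rw [hv'_inl, hv'_inl, hw_dead b N (by omega) (by omega), map_zero, hw_top, hwtop]
          simp only [dif_neg hb]
      · have hkN' : k < N := by omega
        rw [hv'_inl, hv'_inl]
        by_cases hcc : D.a b ≤ k ∧ k < D.d b
        · rw [hw_alive b k (by omega) hcc]
          have hg : g k (D.v b k + ∑ b', C b b' • D.v b' k)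
              = D.v b (k+1) + ∑ b', C b b' • D.v b' (k+1) := by
            rw [map_add, map_sum]
            congr 1
            · exact D.compat b k hcc.1 hkN'
            · apply Finset.sum_congr rfl
              intro b' _
              rw [map_smul]
              by_cases hC0 : C b b' = 0
              · rw [hC0, zero_smul, zero_smul]
              · congr 1
                exact D.compat b' k (hCalive b b' k hC0 hcc.1 (by omega)).1 hkN'
          rw [hg, hw_ne b (k+1) (by omega)]
          by_cases hcc' : D.a b ≤ k+1 ∧ k+1 < D.d b
          · rw [if_pos hcc']
          · rw [if_neg hcc']
            have h1 : D.v b (k+1) = 0 := D.hzero b (k+1) hcc'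
            have h2 : ∀ b', C b b' • D.v b' (k+1) = 0 := by
              intro b'
              by_cases hC0 : C b b' = 0
              · rw [hC0, zero_smul]
              · exfalso
                obtain ⟨_, hbd, _⟩ := hCsupp b b' hC0
                apply hcc'
                constructor
                · omega
                · omega
            rw [h1, Finset.sum_congr rfl (fun b' _ => h2 b'), Finset.sum_const_zero,
              add_zero]
        · rw [hw_dead b k (by omega) hcc, map_zero, hw_ne b (k+1) (by omega), if_neg]
          intro hcc'
          apply hcc
          constructor
          · omega
          · have := hcc'.2; omega
  · -- hli
    intro k hk
    by_cases hkN : k ≤ N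
    · exact linearIndependent_of_top_le_span_of_card_eq_finrank
        (hspan_le k hkN) (hcard_le k hkN)
    · have hkeq : k = N+1 := by omega
      subst hkeq
      exact linearIndependent_of_top_le_span_of_card_eq_finrank hspan_top hcard_top
  · -- hspan
    intro k hk
    by_cases hkN : k ≤ N
    · exact hspan_le k hkN
    · have hkeq : k = N+1 := by omega
      subst hkeq
      exact hspan_top


theorem bc_exists (N : ℕ) : Nonempty (BarcodeData W g N) := by
  induction N with
  | zero => exact bc_zero W g
  | succ N ih =>
    obtain ⟨D⟩ := ih
    exact bc_succ W g N D

end Barcode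



section IntervalFunctor

universe u

variable (s : ℝ≥0) (t : ℝ≥0∞)

def Pt (r : ℝ≥0) : Prop := s ≤ r ∧ (r : ℝ≥0∞) < t

lemma Pt_mid {r r' r'' : ℝ≥0} (h1 : r ≤ r') (h2 : r' ≤ r'') (ha : Pt s t r)
    (hb : Pt s t r'') : Pt s t r' :=
  ⟨le_trans ha.1 h1, lt_of_le_of_lt (ENNReal.coe_le_coe.mpr h2) hb.2⟩

noncomputable def Phi (r : ℝ≥0) : Submodule ℚ (ULift.{u} ℚ) := if Pt s t r then ⊤ else ⊥

lemma Phi_pos {r : ℝ≥0} (h : Pt s t r) : Phi s t r = ⊤ := if_pos h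
lemma Phi_neg {r : ℝ≥0} (h : ¬ Pt s t r) : Phi s t r = ⊥ := if_neg h

lemma Phi_subsingleton {r : ℝ≥0} (h : ¬ Pt s t r) : Subsingleton (Phi s t r) := by
  rw [Phi_neg s t h]
  infer_instance

lemma Phi_le {r r' : ℝ≥0} (h' : Pt s t r') : Phi s t r ≤ Phi s t r' := by
  rw [Phi_pos s t h']
  exact le_top

-- linear map helpers (homs of ModuleCat are linear maps in this mathlib version)
lemma lmap_ext_src' {M N : Type*} [AddCommGroup M] [Module ℚ M] [AddCommGroup N]
    [Module ℚ N] (h : Subsingleton M) (f g : M →ₗ[ℚ] N) : f = g := by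
  ext x
  rw [Subsingleton.elim x 0, map_zero, map_zero]

lemma lmap_ext_tgt' {M N : Type*} [AddCommGroup M] [Module ℚ M] [AddCommGroup N]
    [Module ℚ N] (h : Subsingleton N) (f g : M →ₗ[ℚ] N) : f = g := by
  ext x; exact Subsingleton.elim _ _

noncomputable def IMod : PMod where
  obj r := ModuleCat.of ℚ (Phi s t r)
  map {r r'} f :=
    if h' : Pt s t r' then ModuleCat.ofHom (Submodule.inclusion (Phi_le s t h')) else 0
  map_id r := by
    by_cases h : Pt s t r
    · rw [dif_pos h]
      ext x
      rfl
    · exact ModuleCat.hom_ext (lmap_ext_src' (Phi_subsingleton s t h) _ _)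
  map_comp {r r' r''} f g := by
    by_cases h'' : Pt s t r''
    · by_cases h : Pt s t r
      · have h' : Pt s t r' := Pt_mid s t (leOfHom f) (leOfHom g) h h''
        rw [dif_pos h'', dif_pos h', dif_pos h'']
        ext x
        rfl
      · exact ModuleCat.hom_ext (lmap_ext_src' (Phi_subsingleton s t h) _ _)
    · exact ModuleCat.hom_ext (lmap_ext_tgt' (Phi_subsingleton s t h'') _ _)

lemma IMod_obj (r : ℝ≥0) : (IMod s t).obj r = ModuleCat.of ℚ (Phi s t r) := rfl

lemma IMod_map_pos {r r' : ℝ≥0} (f : r ⟶ r') (h' : Pt s t r') :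
    (IMod s t).map f = ModuleCat.ofHom (Submodule.inclusion (Phi_le s t h')) := dif_pos h'

lemma IMod_map_neg {r r' : ℝ≥0} (f : r ⟶ r') (h' : ¬ Pt s t r') :
    (IMod s t).map f = 0 := dif_neg h'

lemma IMod_isInterval : IsInterval (IMod s t) (s : ℝ≥0∞) t := by
  refine ⟨?_, ?_, ?_⟩
  · intro r h1 h2
    have hp : Pt s t r := ⟨ENNReal.coe_le_coe.mp h1, h2⟩
    show Module.finrank ℚ (Phi s t r) = 1
    rw [Phi_pos s t hp, finrank_top]
    rw [LinearEquiv.finrank_eq (ULift.moduleEquiv (R := ℚ) (M := ℚ))]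
    exact Module.finrank_self ℚ
  · intro r h
    have hp : ¬ Pt s t r := by
      intro hc
      exact h ⟨ENNReal.coe_le_coe.mpr hc.1, hc.2⟩
    exact Phi_subsingleton s t hp
  · intro a b hab h1 h2
    have hpa : Pt s t a := ⟨ENNReal.coe_le_coe.mp h1, lt_of_le_of_lt (ENNReal.coe_le_coe.mpr hab) h2⟩
    have hpb : Pt s t b := ⟨le_trans hpa.1 hab, h2⟩
    rw [IMod_map_pos s t _ hpb]
    have heq : Phi s t a = Phi s t b := by rw [Phi_pos s t hpa, Phi_pos s t hpb]
    refine ⟨⟨ModuleCat.ofHom (LinearEquiv.ofEq _ _ heq.symm).toLinearMap, ?_, ?_⟩⟩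
    · ext x
      apply Subtype.ext
      rfl
    · ext x
      apply Subtype.ext
      rfl

end IntervalFunctor

section Samples

variable (ts : Finset ℝ≥0)

noncomputable def Nn : ℕ := (insert 0 ts).card - 1

lemma Nn_card : (insert 0 ts).card = Nn ts + 1 := by
  have h1 : 0 < (insert 0 ts).card := Finset.card_pos.mpr ⟨0, Finset.mem_insert_self 0 ts⟩
  unfold Nn
  omega

noncomputable def pfun : ℕ → ℝ≥0 := fun k =>
  ((insert 0 ts).orderIsoOfFin (Nn_card ts) ⟨min k (Nn ts), by omega⟩ : ℝ≥0)

lemma pfun_mono : Monotone (pfun ts) := by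
  intro j k hjk
  unfold pfun
  have : (⟨min j (Nn ts), by omega⟩ : Fin (Nn ts + 1)) ≤ ⟨min k (Nn ts), by omega⟩ := by
    simp only [Fin.mk_le_mk]
    omega
  exact ((insert 0 ts).orderIsoOfFin (Nn_card ts)).monotone this

lemma pfun_le_iff {j k : ℕ} (hj : j ≤ Nn ts) (hk : k ≤ Nn ts) :
    pfun ts j ≤ pfun ts k ↔ j ≤ k := by
  unfold pfun
  rw [Subtype.coe_le_coe, OrderIso.le_iff_le, Fin.mk_le_mk]
  omega

lemma pfun_strict {j k : ℕ} (hjk : j < k) (hk : k ≤ Nn ts) : pfun ts j < pfun ts k := by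
  have h1 : pfun ts j ≤ pfun ts k := pfun_mono ts (le_of_lt hjk)
  rcases lt_or_eq_of_le h1 with h | h
  · exact h
  · exfalso
    have := (pfun_le_iff ts hk (by omega : j ≤ Nn ts)).mp (le_of_eq h.symm)
    omega

lemma pfun_zero : pfun ts 0 = 0 := by
  have hmem : (0 : ℝ≥0) ∈ insert 0 ts := Finset.mem_insert_self 0 ts
  refine le_antisymm ?_ zero_le
  unfold pfun
  have h2 := ((insert 0 ts).orderIsoOfFin (Nn_card ts)).monotone
    (Fin.zero_le (((insert 0 ts).orderIsoOfFin (Nn_card ts)).symm ⟨0, hmem⟩))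
  rw [OrderIso.apply_symm_apply] at h2
  have h3 : (⟨min 0 (Nn ts), by omega⟩ : Fin (Nn ts + 1)) = 0 := by
    apply Fin.ext; simp
  rw [h3]
  exact Subtype.coe_le_coe.mpr h2

lemma pfun_cover {c : ℝ≥0} (hc : c ∈ ts) : ∃ k, k ≤ Nn ts ∧ pfun ts k = c := by
  have hmem : c ∈ insert 0 ts := Finset.mem_insert_of_mem hc
  set e := (insert 0 ts).orderIsoOfFin (Nn_card ts) with he
  refine ⟨(e.symm ⟨c, hmem⟩ : Fin (Nn ts + 1)).1, by omega, ?_⟩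
  unfold pfun
  have hmin : min ((e.symm ⟨c, hmem⟩ : Fin (Nn ts + 1)).1) (Nn ts) =
      (e.symm ⟨c, hmem⟩ : Fin (Nn ts + 1)).1 := by
    have := (e.symm ⟨c, hmem⟩ : Fin (Nn ts + 1)).2
    omega
  have : (⟨min ((e.symm ⟨c, hmem⟩ : Fin (Nn ts + 1)).1) (Nn ts), by omega⟩ :
      Fin (Nn ts + 1)) = e.symm ⟨c, hmem⟩ := by
    apply Fin.ext
    simp only [hmin]
  rw [this, OrderIso.apply_symm_apply]

noncomputable def idx (r : ℝ≥0) : ℕ :=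
  ((Finset.range (Nn ts + 1)).filter (fun k => pfun ts k ≤ r)).max'
    ⟨0, by simp [pfun_zero ts]⟩

lemma idx_le (r : ℝ≥0) : idx ts r ≤ Nn ts := by
  unfold idx
  have := Finset.max'_mem ((Finset.range (Nn ts + 1)).filter (fun k => pfun ts k ≤ r))
    ⟨0, by simp [pfun_zero ts]⟩
  simp only [Finset.mem_filter, Finset.mem_range] at this
  omega

lemma idx_spec1 (r : ℝ≥0) : pfun ts (idx ts r) ≤ r := by
  unfold idx
  have := Finset.max'_mem ((Finset.range (Nn ts + 1)).filter (fun k => pfun ts k ≤ r))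
    ⟨0, by simp [pfun_zero ts]⟩
  simp only [Finset.mem_filter, Finset.mem_range] at this
  exact this.2

lemma idx_spec2 {k : ℕ} (r : ℝ≥0) (hk : k ≤ Nn ts) (h : pfun ts k ≤ r) : k ≤ idx ts r := by
  unfold idx
  apply Finset.le_max'
  simp only [Finset.mem_filter, Finset.mem_range]
  exact ⟨by omega, h⟩

lemma idx_ge_iff {k : ℕ} (r : ℝ≥0) (hk : k ≤ Nn ts) : pfun ts k ≤ r ↔ k ≤ idx ts r := by
  constructor
  · exact idx_spec2 ts r hk
  · intro h
    exact le_trans (pfun_mono ts h) (idx_spec1 ts r)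

lemma idx_mono {r r' : ℝ≥0} (h : r ≤ r') : idx ts r ≤ idx ts r' := by
  apply idx_spec2 ts r' (idx_le ts r)
  exact le_trans (idx_spec1 ts r) h

lemma idx_pfun {k : ℕ} (hk : k ≤ Nn ts) : idx ts (pfun ts k) = k := by
  refine le_antisymm ?_ (idx_spec2 ts _ hk (le_refl _))
  rw [← pfun_le_iff ts (idx_le ts _) hk]
  exact idx_spec1 ts _

end Samples

section Decomp

variable (V : PMod) (ts : Finset ℝ≥0)

noncomputable def gmap (k : ℕ) :
    ↥(V.obj (pfun ts k)) →ₗ[ℚ] ↥(V.obj (pfun ts (k+1))) :=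
  (V.map (homOfLE (pfun_mono ts (Nat.le_succ k)))).hom

noncomputable def DD (hF : FiniteType V) :
    BarcodeData (fun k => ↥(V.obj (pfun ts k))) (gmap V ts) (Nn ts) := by
  haveI : ∀ k, FiniteDimensional ℚ ↥(V.obj (pfun ts k)) := fun k => hF _
  exact (bc_exists _ _ _).some

variable (hF : FiniteType V)

noncomputable def nb : ℕ := @Fintype.card (DD V ts hF).B (DD V ts hF).fin

noncomputable def eqv : Fin (nb V ts hF) ≃ (DD V ts hF).B :=
  (@Fintype.equivFin _ (DD V ts hF).fin).symm

noncomputable def af (i : Fin (nb V ts hF)) : ℕ := (DD V ts hF).a (eqv V ts hF i)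
noncomputable def df (i : Fin (nb V ts hF)) : ℕ := (DD V ts hF).d (eqv V ts hF i)
noncomputable def vvf (i : Fin (nb V ts hF)) (k : ℕ) : ↥(V.obj (pfun ts k)) :=
  (DD V ts hF).v (eqv V ts hF i) k

noncomputable def sI (i : Fin (nb V ts hF)) : ℝ≥0 := pfun ts (af V ts hF i)
noncomputable def tI (i : Fin (nb V ts hF)) : ℝ≥0∞ :=
  if df V ts hF i = Nn ts + 1 then ⊤ else ((pfun ts (df V ts hF i) : ℝ≥0) : ℝ≥0∞)

lemma haf_lt (i : Fin (nb V ts hF)) : af V ts hF i < df V ts hF i := (DD V ts hF).had _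
lemma hdf_le (i : Fin (nb V ts hF)) : df V ts hF i ≤ Nn ts + 1 := (DD V ts hF).hdN _
lemma haf_le (i : Fin (nb V ts hF)) : af V ts hF i ≤ Nn ts := by
  have := haf_lt V ts hF i; have := hdf_le V ts hF i; omega

lemma hvz (i : Fin (nb V ts hF)) (k : ℕ) (h : ¬ (af V ts hF i ≤ k ∧ k < df V ts hF i)) :
    vvf V ts hF i k = 0 := (DD V ts hF).hzero _ k h

lemma hcompat (i : Fin (nb V ts hF)) (k : ℕ) (h1 : af V ts hF i ≤ k) (h2 : k < Nn ts) :
    gmap V ts k (vvf V ts hF i k) = vvf V ts hF i (k+1) := (DD V ts hF).compat _ k h1 h2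

lemma hst (i : Fin (nb V ts hF)) : ((sI V ts hF i : ℝ≥0) : ℝ≥0∞) < tI V ts hF i := by
  unfold tI
  by_cases h : df V ts hF i = Nn ts + 1
  · rw [if_pos h]
    exact ENNReal.coe_lt_top
  · rw [if_neg h]
    rw [ENNReal.coe_lt_coe]
    apply pfun_strict ts (haf_lt V ts hF i)
    have := hdf_le V ts hF i; omega

lemma alive_iff (i : Fin (nb V ts hF)) (r : ℝ≥0) :
    Pt (sI V ts hF i) (tI V ts hF i) r ↔
      (af V ts hF i ≤ idx ts r ∧ idx ts r < df V ts hF i) := by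
  unfold Pt
  have h1 : sI V ts hF i ≤ r ↔ af V ts hF i ≤ idx ts r :=
    idx_ge_iff ts r (haf_le V ts hF i)
  rw [h1]
  apply and_congr_right
  intro _
  unfold tI
  by_cases h : df V ts hF i = Nn ts + 1
  · rw [if_pos h]
    constructor
    · intro _
      have := idx_le ts r; omega
    · intro _
      exact ENNReal.coe_lt_top
  · rw [if_neg h, ENNReal.coe_lt_coe]
    have hdN : df V ts hF i ≤ Nn ts := by have := hdf_le V ts hF i; omega
    rw [lt_iff_not_ge, lt_iff_not_ge, not_iff_not]
    exact idx_ge_iff ts r hdN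

noncomputable def vbar (i : Fin (nb V ts hF)) (r : ℝ≥0) : ↥(V.obj r) :=
  V.map (homOfLE (idx_spec1 ts r)) (vvf V ts hF i (idx ts r))

lemma traj (i : Fin (nb V ts hF)) (k k' : ℕ) (hk : af V ts hF i ≤ k) (hkk : k ≤ k')
    (hk' : k' ≤ Nn ts) :
    V.map (homOfLE (pfun_mono ts hkk)) (vvf V ts hF i k) = vvf V ts hF i k' := by
  have H : ∀ m k0, af V ts hF i ≤ k0 → ∀ (hle : k0 ≤ m), m ≤ Nn ts →
      V.map (homOfLE (pfun_mono ts hle)) (vvf V ts hF i k0) = vvf V ts hF i m := by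
    intro m
    induction m with
    | zero =>
      intro k0 h0 hle hNn
      have hz : k0 = 0 := by omega
      subst hz
      rw [Subsingleton.elim (homOfLE (pfun_mono ts hle)) (𝟙 (pfun ts 0)), V.map_id]
      rfl
    | succ m ih =>
      intro k0 h0 hle hNn
      by_cases hkm : k0 = m+1
      · subst hkm
        rw [Subsingleton.elim (homOfLE (pfun_mono ts hle)) (𝟙 (pfun ts (m+1))), V.map_id]
        rfl
      · have hkm' : k0 ≤ m := by omega
        have hsplit : homOfLE (pfun_mono ts hle) =
            homOfLE (pfun_mono ts hkm') ≫ homOfLE (pfun_mono ts (Nat.le_succ m)) :=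
          Subsingleton.elim _ _
        rw [hsplit, V.map_comp]
        have hstep : (V.map (homOfLE (pfun_mono ts hkm')) ≫
            V.map (homOfLE (pfun_mono ts (Nat.le_succ m)))) (vvf V ts hF i k0) =
            V.map (homOfLE (pfun_mono ts (Nat.le_succ m)))
              (V.map (homOfLE (pfun_mono ts hkm')) (vvf V ts hF i k0)) := rfl
        rw [hstep, ih k0 h0 hkm' (by omega)]
        exact hcompat V ts hF i m (le_trans h0 hkm') (by omega)
  exact H k' k hk hkk hk'

lemma flat (i : Fin (nb V ts hF)) (r r' : ℝ≥0) (h : r ≤ r') (hs : sI V ts hF i ≤ r) :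
    V.map (homOfLE h) (vbar V ts hF i r) = vbar V ts hF i r' := by
  unfold vbar
  have h1 : af V ts hF i ≤ idx ts r := (idx_ge_iff ts r (haf_le V ts hF i)).mp hs
  have h2 : idx ts r ≤ idx ts r' := idx_mono ts h
  have hcomp1 : V.map (homOfLE h) (V.map (homOfLE (idx_spec1 ts r)) (vvf V ts hF i (idx ts r)))
      = V.map (homOfLE (idx_spec1 ts r) ≫ homOfLE h) (vvf V ts hF i (idx ts r)) := by
    rw [V.map_comp]; rfl
  rw [hcomp1]
  have he : (homOfLE (idx_spec1 ts r) ≫ homOfLE h : pfun ts (idx ts r) ⟶ r') =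
      homOfLE (pfun_mono ts h2) ≫ homOfLE (idx_spec1 ts r') := Subsingleton.elim _ _
  rw [he, V.map_comp]
  have : (V.map (homOfLE (pfun_mono ts h2)) ≫ V.map (homOfLE (idx_spec1 ts r')))
      (vvf V ts hF i (idx ts r)) =
      V.map (homOfLE (idx_spec1 ts r'))
        (V.map (homOfLE (pfun_mono ts h2)) (vvf V ts hF i (idx ts r))) := rfl
  rw [this, traj V ts hF i _ _ h1 h2 (idx_le ts r')]

lemma vbar_zero (i : Fin (nb V ts hF)) (r : ℝ≥0)
    (h : ¬ Pt (sI V ts hF i) (tI V ts hF i) r) : vbar V ts hF i r = 0 := by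
  unfold vbar
  rw [hvz V ts hF i (idx ts r) (by rw [alive_iff] at h; exact h), map_zero]

section WithDiscretizes

lemma isoW (hd : Discretizes V ts) (r : ℝ≥0) : IsIso (V.map (homOfLE (idx_spec1 ts r))) := by
  apply hd
  rintro ⟨c, hcts, h1, h2⟩
  obtain ⟨k, hk, rfl⟩ := pfun_cover ts hcts
  have h3 : k ≤ idx ts r := idx_spec2 ts r hk h2
  have h4 : pfun ts k ≤ pfun ts (idx ts r) := pfun_mono ts h3
  exact absurd h1 (not_lt.mpr h4)

noncomputable def ew (hd : Discretizes V ts) (r : ℝ≥0) : ↥(V.obj (pfun ts (idx ts r))) ≃ₗ[ℚ] ↥(V.obj r) :=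
  haveI := isoW V ts hd r
  (asIso (V.map (homOfLE (idx_spec1 ts r)))).toLinearEquiv

lemma ew_apply (hd : Discretizes V ts) (r : ℝ≥0) (x : ↥(V.obj (pfun ts (idx ts r)))) :
    ew V ts hd r x = V.map (homOfLE (idx_spec1 ts r)) x := rfl

lemma vbar_li (hd : Discretizes V ts) (r : ℝ≥0) :
    LinearIndependent ℚ
      (fun s : {i : Fin (nb V ts hF) // Pt (sI V ts hF i) (tI V ts hF i) r} =>
        vbar V ts hF s.1 r) := by
  have hold := (DD V ts hF).hli (idx ts r) (idx_le ts r)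
  have hli2 := hold.map' (ew V ts hd r).toLinearMap (LinearEquiv.ker _)
  have hli3 := hli2.comp
    (fun s : {i : Fin (nb V ts hF) // Pt (sI V ts hF i) (tI V ts hF i) r} =>
      (⟨eqv V ts hF s.1, ((alive_iff V ts hF s.1 r).mp s.2 : _)⟩ :
        {b : (DD V ts hF).B // (DD V ts hF).a b ≤ idx ts r ∧ idx ts r < (DD V ts hF).d b}))
    (by
      rintro ⟨i, hi⟩ ⟨i', hi'⟩ he
      have := congrArg Subtype.val he
      simp only at this
      exact Subtype.ext ((eqv V ts hF).injective this))
  exact hli3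

lemma vbar_span (hd : Discretizes V ts) (r : ℝ≥0) :
    ⊤ ≤ Submodule.span ℚ (Set.range
      (fun s : {i : Fin (nb V ts hF) // Pt (sI V ts hF i) (tI V ts hF i) r} =>
        vbar V ts hF s.1 r)) := by
  intro x _
  have hy : (ew V ts hd r).symm x ∈ Submodule.span ℚ (Set.range
      (fun b : {b : (DD V ts hF).B //
          (DD V ts hF).a b ≤ idx ts r ∧ idx ts r < (DD V ts hF).d b} =>
        (DD V ts hF).v b.1 (idx ts r))) :=
    (DD V ts hF).hspan (idx ts r) (idx_le ts r) trivial
  have hx : x = ew V ts hd r ((ew V ts hd r).symm x) := (LinearEquiv.apply_symm_apply _ _).symm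
  rw [hx]
  have hmem := Submodule.mem_map_of_mem (f := (ew V ts hd r).toLinearMap) hy
  rw [← Submodule.span_image] at hmem
  refine Submodule.span_mono ?_ hmem
  rintro y ⟨z, ⟨b, rfl⟩, rfl⟩
  refine ⟨⟨(eqv V ts hF).symm b.1, ?_⟩, ?_⟩
  · rw [alive_iff]
    unfold af df
    rw [(eqv V ts hF).apply_symm_apply]
    exact b.2
  · show ew V ts hd r (vvf V ts hF ((eqv V ts hF).symm b.1) (idx ts r)) = _
    unfold vvf
    rw [(eqv V ts hF).apply_symm_apply]
    rfl

noncomputable def basAt (hd : Discretizes V ts) (r : ℝ≥0) :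
    Module.Basis {i : Fin (nb V ts hF) // Pt (sI V ts hF i) (tI V ts hF i) r} ℚ ↥(V.obj r) :=
  Module.Basis.mk (vbar_li V ts hF hd r) (vbar_span V ts hF hd r)

lemma basAt_apply (hd : Discretizes V ts) (r : ℝ≥0)
    (s : {i : Fin (nb V ts hF) // Pt (sI V ts hF i) (tI V ts hF i) r}) :
    basAt V ts hF hd r s = vbar V ts hF s.1 r := Module.Basis.mk_apply _ _ _

lemma expand (hd : Discretizes V ts) (r r' : ℝ≥0) (h : r ≤ r') (x : ↥(V.obj r)) :
    V.map (homOfLE h) x =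
      ∑ s : {i : Fin (nb V ts hF) // Pt (sI V ts hF i) (tI V ts hF i) r},
        ((basAt V ts hF hd r).repr x s) • vbar V ts hF s.1 r' := by
  have hx : x = ∑ s : {i : Fin (nb V ts hF) // Pt (sI V ts hF i) (tI V ts hF i) r},
      ((basAt V ts hF hd r).repr x s) • basAt V ts hF hd r s :=
    (Module.Basis.sum_repr _ x).symm
  conv_lhs => rw [hx]
  rw [map_sum]
  apply Finset.sum_congr rfl
  intro s _
  rw [map_smul]
  congr 1
  rw [basAt_apply]
  exact flat V ts hF s.1 r r' h s.2.1

lemma repr_vbar (hd : Discretizes V ts) (r' : ℝ≥0) (j : Fin (nb V ts hF))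
    (s' : {i : Fin (nb V ts hF) // Pt (sI V ts hF i) (tI V ts hF i) r'}) :
    (basAt V ts hF hd r').repr (vbar V ts hF j r') s' = if j = s'.1 then 1 else 0 := by
  by_cases hj : Pt (sI V ts hF j) (tI V ts hF j) r'
  · rw [← basAt_apply V ts hF hd r' ⟨j, hj⟩, Module.Basis.repr_self_apply]
    by_cases he : j = s'.1
    · rw [if_pos he, if_pos]
      exact Subtype.ext he
    · rw [if_neg he, if_neg (fun hc => he (congrArg Subtype.val hc))]
  · rw [vbar_zero V ts hF j r' hj, map_zero]
    have hne : j ≠ s'.1 := fun hc => hj (hc ▸ s'.2)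
    rw [if_neg hne]
    simp

lemma coord_push (hd : Discretizes V ts) (r r' : ℝ≥0) (h : r ≤ r') (x : ↥(V.obj r))
    (s' : {i : Fin (nb V ts hF) // Pt (sI V ts hF i) (tI V ts hF i) r'}) :
    (basAt V ts hF hd r').repr (V.map (homOfLE h) x) s' =
      (if hs : Pt (sI V ts hF s'.1) (tI V ts hF s'.1) r then
        (basAt V ts hF hd r).repr x ⟨s'.1, hs⟩ else 0) := by
  rw [expand V ts hF hd r r' h x, map_sum, Finsupp.finset_sum_apply]
  have hterm : ∀ s : {i : Fin (nb V ts hF) // Pt (sI V ts hF i) (tI V ts hF i) r},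
      ((basAt V ts hF hd r').repr (((basAt V ts hF hd r).repr x s) • vbar V ts hF s.1 r')) s' =
      ((basAt V ts hF hd r).repr x s) * (if s.1 = s'.1 then 1 else 0) := by
    intro s
    rw [map_smul, Finsupp.smul_apply, repr_vbar V ts hF hd r' s.1 s', smul_eq_mul]
  rw [Finset.sum_congr rfl (fun s _ => hterm s)]
  by_cases hs : Pt (sI V ts hF s'.1) (tI V ts hF s'.1) r
  · rw [dif_pos hs]
    rw [Finset.sum_eq_single (⟨s'.1, hs⟩ :
      {i : Fin (nb V ts hF) // Pt (sI V ts hF i) (tI V ts hF i) r})]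
    · rw [if_pos rfl, mul_one]
    · intro s _ hne
      rw [if_neg (fun hc => hne (Subtype.ext hc)), mul_zero]
    · intro hmem
      exact absurd (Finset.mem_univ _) hmem
  · rw [dif_neg hs]
    apply Finset.sum_eq_zero
    intro s _
    have : s.1 ≠ s'.1 := fun hc => hs (hc ▸ s.2)
    rw [if_neg this, mul_zero]

noncomputable def Iota (hd : Discretizes V ts) (i : Fin (nb V ts hF)) :
    IMod (sI V ts hF i) (tI V ts hF i) ⟶ V where
  app r := ModuleCat.ofHom
    ((LinearMap.toSpanSingleton ℚ _ (vbar V ts hF i r)).comp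
      ((ULift.moduleEquiv.toLinearMap).comp
        (Submodule.subtype (Phi (sI V ts hF i) (tI V ts hF i) r))))
  naturality {r r'} f := by
    by_cases hr' : Pt (sI V ts hF i) (tI V ts hF i) r'
    · rw [IMod_map_pos _ _ f hr']
      by_cases hr : Pt (sI V ts hF i) (tI V ts hF i) r
      · ext x
        show x.1.down • vbar V ts hF i r' = V.map f (x.1.down • vbar V ts hF i r)
        rw [map_smul]
        congr 1
        rw [Subsingleton.elim f (homOfLE (leOfHom f))]
        exact (flat V ts hF i r r' (leOfHom f) hr.1).symm
      · exact ModuleCat.hom_ext (lmap_ext_src' (Phi_subsingleton _ _ hr) _ _)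
    · rw [IMod_map_neg _ _ f hr']
      erw [zero_comp]
      by_cases hr : Pt (sI V ts hF i) (tI V ts hF i) r
      · ext x
        show (0 : ↥(V.obj r')) = V.map f (x.1.down • vbar V ts hF i r)
        rw [map_smul, Subsingleton.elim f (homOfLE (leOfHom f)),
          flat V ts hF i r r' (leOfHom f) hr.1, vbar_zero V ts hF i r' hr']
        simp
      · exact ModuleCat.hom_ext (lmap_ext_src' (Phi_subsingleton _ _ hr) _ _)

noncomputable def PiF (hd : Discretizes V ts) (i : Fin (nb V ts hF)) :
    V ⟶ IMod (sI V ts hF i) (tI V ts hF i) where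
  app r :=
    if h : Pt (sI V ts hF i) (tI V ts hF i) r then
      ModuleCat.ofHom
        ((LinearEquiv.ofEq ⊤ (Phi (sI V ts hF i) (tI V ts hF i) r)
            (Phi_pos _ _ h).symm).toLinearMap.comp
          ((Submodule.topEquiv.symm.toLinearMap.comp
              (ULift.moduleEquiv.symm.toLinearMap : ℚ →ₗ[ℚ] ULift ℚ)).comp
            ((basAt V ts hF hd r).coord ⟨i, h⟩)))
    else 0
  naturality {r r'} f := by
    by_cases hr' : Pt (sI V ts hF i) (tI V ts hF i) r'
    · simp only [hr', ↓reduceDIte, IMod_map_pos _ _ f hr']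
      by_cases hr : Pt (sI V ts hF i) (tI V ts hF i) r
      · simp only [hr, ↓reduceDIte]
        ext x
        apply Subtype.ext
        apply ULift.ext
        show (basAt V ts hF hd r').repr (V.map f x) ⟨i, hr'⟩ =
          (basAt V ts hF hd r).repr x ⟨i, hr⟩
        rw [Subsingleton.elim f (homOfLE (leOfHom f)),
          coord_push V ts hF hd r r' (leOfHom f) x ⟨i, hr'⟩, dif_pos hr]
      · simp only [hr, ↓reduceDIte]
        ext x
        apply Subtype.ext
        apply ULift.ext
        show (basAt V ts hF hd r').repr (V.map f x) ⟨i, hr'⟩ = (0 : ℚ)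
        rw [Subsingleton.elim f (homOfLE (leOfHom f)),
          coord_push V ts hF hd r r' (leOfHom f) x ⟨i, hr'⟩, dif_neg hr]
    · simp only [hr', ↓reduceDIte, IMod_map_neg _ _ f hr', comp_zero]

lemma Iota_app (hd : Discretizes V ts) (i : Fin (nb V ts hF)) (r : ℝ≥0) :
    (Iota V ts hF hd i).app r = ModuleCat.ofHom
      ((LinearMap.toSpanSingleton ℚ _ (vbar V ts hF i r)).comp
        ((ULift.moduleEquiv.toLinearMap).comp
          (Submodule.subtype (Phi (sI V ts hF i) (tI V ts hF i) r)))) := rfl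

lemma PiF_app (hd : Discretizes V ts) (i : Fin (nb V ts hF)) (r : ℝ≥0) :
    (PiF V ts hF hd i).app r =
      (if h : Pt (sI V ts hF i) (tI V ts hF i) r then
        ModuleCat.ofHom
          ((LinearEquiv.ofEq ⊤ (Phi (sI V ts hF i) (tI V ts hF i) r)
              (Phi_pos _ _ h).symm).toLinearMap.comp
            ((Submodule.topEquiv.symm.toLinearMap.comp
                (ULift.moduleEquiv.symm.toLinearMap : ℚ →ₗ[ℚ] ULift ℚ)).comp
              ((basAt V ts hF hd r).coord ⟨i, h⟩)))
      else 0) := rfl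

lemma Iota_Pi_self (hd : Discretizes V ts) (i : Fin (nb V ts hF)) :
    Iota V ts hF hd i ≫ PiF V ts hF hd i = 𝟙 _ := by
  apply NatTrans.ext
  funext r
  rw [NatTrans.comp_app, NatTrans.id_app]
  by_cases h : Pt (sI V ts hF i) (tI V ts hF i) r
  · rw [Iota_app, PiF_app, dif_pos h]
    ext x
    apply Subtype.ext
    apply ULift.ext
    show (basAt V ts hF hd r).repr (x.1.down • vbar V ts hF i r) ⟨i, h⟩ = x.1.down
    rw [map_smul, Finsupp.smul_apply, repr_vbar V ts hF hd r i ⟨i, h⟩, if_pos rfl,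
      smul_eq_mul, mul_one]
  · exact ModuleCat.hom_ext (lmap_ext_src' (Phi_subsingleton _ _ h) _ _)

lemma Iota_Pi_ne (hd : Discretizes V ts) {i j : Fin (nb V ts hF)} (hij : i ≠ j) :
    Iota V ts hF hd i ≫ PiF V ts hF hd j = 0 := by
  apply NatTrans.ext
  funext r
  rw [NatTrans.comp_app]
  have hz : (0 : IMod (sI V ts hF i) (tI V ts hF i) ⟶
      IMod (sI V ts hF j) (tI V ts hF j)).app r = 0 := rfl
  rw [hz]
  by_cases hj : Pt (sI V ts hF j) (tI V ts hF j) r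
  · rw [Iota_app, PiF_app, dif_pos hj]
    ext x
    apply Subtype.ext
    apply ULift.ext
    show (basAt V ts hF hd r).repr (x.1.down • vbar V ts hF i r) ⟨j, hj⟩ = (0 : ℚ)
    rw [map_smul, Finsupp.smul_apply, repr_vbar V ts hF hd r i ⟨j, hj⟩, if_neg hij,
      smul_zero]
  · exact ModuleCat.hom_ext (lmap_ext_tgt' (Phi_subsingleton _ _ hj) _ _)

lemma sum_Pi_Iota (hd : Discretizes V ts) :
    (∑ i : Fin (nb V ts hF), PiF V ts hF hd i ≫ Iota V ts hF hd i) = 𝟙 V := by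
  apply NatTrans.ext
  funext r
  rw [NatTrans.app_sum]
  have hterm : ∀ (i : Fin (nb V ts hF)) (x : ↥(V.obj r)),
      ((PiF V ts hF hd i ≫ Iota V ts hF hd i).app r) x =
      (if h : Pt (sI V ts hF i) (tI V ts hF i) r then
        ((basAt V ts hF hd r).repr x ⟨i, h⟩) • vbar V ts hF i r else 0) := by
    intro i x
    rw [NatTrans.comp_app]
    by_cases h : Pt (sI V ts hF i) (tI V ts hF i) r
    · rw [dif_pos h]
      show (Iota V ts hF hd i).app r ((PiF V ts hF hd i).app r x) = _
      rw [PiF_app, dif_pos h]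
      rfl
    · rw [dif_neg h]
      show (Iota V ts hF hd i).app r ((PiF V ts hF hd i).app r x) = _
      rw [PiF_app, dif_neg h]
      exact map_zero _
  ext x
  show (∑ i : Fin (nb V ts hF), (PiF V ts hF hd i ≫ Iota V ts hF hd i).app r).hom x = x
  rw [ModuleCat.hom_sum, LinearMap.sum_apply]
  rw [Finset.sum_congr rfl (fun i _ => hterm i x)]
  rw [sum_dite_zero (fun i => Pt (sI V ts hF i) (tI V ts hF i) r)
    (fun i h => ((basAt V ts hF hd r).repr x ⟨i, h⟩) • vbar V ts hF i r)]
  have : ∀ s : {i : Fin (nb V ts hF) // Pt (sI V ts hF i) (tI V ts hF i) r},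
      ((basAt V ts hF hd r).repr x ⟨s.1, s.2⟩) • vbar V ts hF s.1 r =
      ((basAt V ts hF hd r).repr x s) • basAt V ts hF hd r s := by
    intro s
    rw [basAt_apply]
  rw [Finset.sum_congr rfl (fun s _ => this s)]
  exact Module.Basis.sum_repr _ x

end WithDiscretizes

end Decomp

/-- every tame persistence module of finite type decomposes as a finite
direct sum of half-open interval modules `I_{[s_i, t_i)}` (with `t_i` possibly `∞`). -/
theorem stmt3 (V : PMod) (hT : Tame V) (hF : FiniteType V) :
    ∃ (n : ℕ) (sIdx : Fin n → ℝ≥0) (tIdx : Fin n → ℝ≥0∞) (I : Fin n → PMod),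
      (∀ i, (sIdx i : ℝ≥0∞) < tIdx i) ∧
      (∀ i, IsInterval (I i) (sIdx i : ℝ≥0∞) (tIdx i)) ∧
      Nonempty (V ≅ ⨁ I) := by
  obtain ⟨ts, hd⟩ := hT
  refine ⟨nb V ts hF, sI V ts hF, tI V ts hF,
    fun i => IMod (sI V ts hF i) (tI V ts hF i), ?_, ?_, ?_⟩
  · exact hst V ts hF
  · intro i
    exact IMod_isInterval _ _
  · refine ⟨⟨biproduct.lift (fun i => PiF V ts hF hd i),
      biproduct.desc (fun i => Iota V ts hF hd i), ?_, ?_⟩⟩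
    · rw [biproduct.lift_desc]
      exact sum_Pi_Iota V ts hF hd
    · apply biproduct.hom_ext
      intro j
      rw [Category.assoc, biproduct.lift_π, Category.id_comp]
      apply biproduct.hom_ext'
      intro i
      rw [biproduct.ι_desc_assoc, biproduct.ι_π]
      by_cases hij : i = j
      · subst hij
        rw [dif_pos rfl, eqToHom_refl]
        exact Iota_Pi_self V ts hF hd i
      · rw [dif_neg hij]
        exact Iota_Pi_ne V ts hF hd hij
end

section
/- Let V be a persistence module containing a right-closed point, i.e., a nonzero element v ∈ V(r) such that V(r ≤ r+ε)(v) = 0 for all ε > 0. Then v admits no compact neighbourhood: there is no submodule U ⊆ V containing v such that U is tame and of finite type (equivalently, a finite direct sum of half-open interval modules). In particular V is not locally compact. -/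
open CategoryTheory CategoryTheory.Limits NNReal
open scoped ENNReal

/-- A sub-persistence-module: a family of `ℚ`-subspaces preserved by the structure maps. -/
structure Subpersistence (V : PMod) where
  U : ∀ r : ℝ≥0, Submodule ℚ (V.obj r)
  maps_mem : ∀ a b : ℝ≥0, ∀ h : a ≤ b, ∀ x ∈ U a, (V.map (homOfLE h)) x ∈ U b

/-- Tameness of a sub-persistence-module: away from finitely many thresholds, the
structure maps restrict to bijections between the subspaces. -/
def SubTame {V : PMod} (W : Subpersistence V) : Prop :=
  ∃ ts : Finset ℝ≥0, ∀ a b : ℝ≥0, ∀ h : a ≤ b, (¬ ∃ c ∈ ts, a < c ∧ c ≤ b) →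
    Set.BijOn (V.map (homOfLE h)) (W.U a : Set (V.obj a)) (W.U b : Set (V.obj b))

/-- Finite type for a sub-persistence-module: each subspace is finite dimensional. -/
def SubFiniteType {V : PMod} (W : Subpersistence V) : Prop :=
  ∀ r : ℝ≥0, FiniteDimensional ℚ ↥(W.U r)

/-- A compact (= tame and finite type, equivalently finitely interval-decomposable)
sub-persistence-module. -/
def IsCompactSub {V : PMod} (W : Subpersistence V) : Prop :=
  SubTame W ∧ SubFiniteType W

/-- `V` is locally compact if every element admits a compact neighbourhood. -/
def LocallyCompact (V : PMod) : Prop :=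
  ∀ (r : ℝ≥0) (v : V.obj r), ∃ W : Subpersistence V, v ∈ W.U r ∧ IsCompactSub W

/-- if `v ∈ V(r)` is a nonzero right-closed point (killed by every forward
structure map `V(r ≤ r+ε)`, `ε > 0`), then `v` admits no compact neighbourhood: no
tame, finite-type submodule of `V` contains `v`.  In particular `V` is not locally
compact. -/
theorem stmt6 (V : PMod) (r : ℝ≥0) (v : V.obj r) (hv : v ≠ 0)
    (hrc : ∀ ε : ℝ≥0, 0 < ε → (V.map (homOfLE (le_self_add : r ≤ r + ε))) v = 0) :
    (¬ ∃ W : Subpersistence V, v ∈ W.U r ∧ IsCompactSub W) ∧ ¬ LocallyCompact V := by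
  have key : ¬ ∃ W : Subpersistence V, v ∈ W.U r ∧ IsCompactSub W := by
    rintro ⟨W, hvW, ⟨ts, hts⟩, -⟩
    obtain ⟨ε, hε, hno⟩ : ∃ ε : ℝ≥0, 0 < ε ∧ ∀ c ∈ ts, ¬ (r < c ∧ c ≤ r + ε) := by
      by_cases h : (ts.filter (fun c => r < c)).Nonempty
      · set c₀ := (ts.filter (fun c => r < c)).min' h with hc₀
        have hc₀mem := (ts.filter (fun c => r < c)).min'_mem h
        have hrc₀ : r < c₀ := (Finset.mem_filter.1 hc₀mem).2
        refine ⟨(c₀ - r)/2, div_pos (tsub_pos_of_lt hrc₀) two_pos, ?_⟩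
        have hlt : r + (c₀ - r)/2 < c₀ := by
          have h1 : (c₀ - r)/2 < c₀ - r := half_lt_self (tsub_pos_of_lt hrc₀).ne'
          calc r + (c₀ - r)/2 < r + (c₀ - r) := by exact (add_lt_add_iff_left r).2 h1
            _ = c₀ := add_tsub_cancel_of_le hrc₀.le
        rintro c hc ⟨h1, h2⟩
        have : c₀ ≤ c := Finset.min'_le _ _ (Finset.mem_filter.2 ⟨hc, h1⟩)
        exact absurd (this.trans h2) (not_le.2 hlt)
      · exact ⟨1, one_pos, fun c hc hcc => h ⟨c, Finset.mem_filter.2 ⟨hc, hcc.1⟩⟩⟩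
    have hbij := hts r (r + ε) le_self_add (by
      rintro ⟨c, hc, h1, h2⟩; exact hno c hc ⟨h1, h2⟩)
    have h0 : (V.map (homOfLE (le_self_add : r ≤ r + ε))) v
        = (V.map (homOfLE (le_self_add : r ≤ r + ε))) (0 : V.obj r) := by
      rw [hrc ε hε, map_zero]
    exact hv (hbij.injOn hvW (W.U r).zero_mem h0)
  exact ⟨key, fun h => key (h r v)⟩
end

section
/- For s ≤ p < q ≤ t, there is no nonzero morphism of persistence modules from the half-open interval module I_{[p,q)} to the closed interval module I_{[s,t]} that is injective; more strongly, the closed interval module I_{[s,t]} (with s < t) contains no nonzero compact submodule, hence fails to be locally compact. -/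
open CategoryTheory CategoryTheory.Limits NNReal
open scoped ENNReal

/-- The closed interval module `I_{[s,t]}`, characterized up to isomorphism. -/
def IsClosedInterval (V : PMod) (s t : ℝ≥0) : Prop :=
  (∀ r : ℝ≥0, s ≤ r → r ≤ t → Module.finrank ℚ (V.obj r) = 1) ∧
  (∀ r : ℝ≥0, ¬ (s ≤ r ∧ r ≤ t) → Subsingleton (V.obj r)) ∧
  (∀ a b : ℝ≥0, ∀ h : a ≤ b, s ≤ a → b ≤ t → IsIso (V.map (homOfLE h)))

/-- for `s ≤ p < q ≤ t` there is no nonzero pointwise-injective morphism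
`I_{[p,q)} → I_{[s,t]}`; more strongly, the closed interval module `I_{[s,t]}` (with
`s < t`) contains no nonzero compact submodule, hence fails to be locally compact. -/
theorem stmt7 (s t : ℝ≥0) (hst : s < t) (C : PMod) (hC : IsClosedInterval C s t) :
    (∀ p q : ℝ≥0, s ≤ p → p < q → q ≤ t → ∀ P : PMod,
      IsInterval P (p : ℝ≥0∞) (q : ℝ≥0∞) →
      ¬ ∃ η : P ⟶ C, (∀ r : ℝ≥0, Function.Injective (η.app r)) ∧ η ≠ 0) ∧
    (∀ W : Subpersistence C, IsCompactSub W → ∀ r : ℝ≥0, W.U r = ⊥) ∧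
    ¬ LocallyCompact C := by
  classical
  obtain ⟨hC1, hC2, hC3⟩ := hC
  -- finite-dimensionality of each C.obj r
  have hfd : ∀ r : ℝ≥0, FiniteDimensional ℚ (C.obj r) := by
    intro r
    by_cases hr : s ≤ r ∧ r ≤ t
    · exact Module.finite_of_finrank_pos (by rw [hC1 r hr.1 hr.2]; norm_num)
    · haveI := hC2 r hr
      infer_instance
  -- the key part: no nonzero compact submodule
  have key : ∀ W : Subpersistence C, IsCompactSub W → ∀ r : ℝ≥0, W.U r = ⊥ := by
    intro W ⟨⟨ts, hts⟩, _⟩ r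
    by_contra hne
    obtain ⟨x, hx, hx0⟩ := (W.U r).exists_mem_ne_zero_of_ne_bot hne
    have hr : s ≤ r ∧ r ≤ t := by
      by_contra h
      haveI := hC2 r h
      exact hx0 (Subsingleton.elim x 0)
    -- push x to time t
    set y := (C.map (homOfLE hr.2)) x with hy_def
    have hy : y ∈ W.U t := W.maps_mem r t hr.2 x hx
    have hy0 : y ≠ 0 := by
      haveI : IsIso (C.map (homOfLE hr.2)) := hC3 r t hr.2 hr.1 le_rfl
      intro h
      apply hx0
      have hinj : Function.Injective (C.map (homOfLE hr.2)) :=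
        (ModuleCat.mono_iff_injective _).mp inferInstance
      exact hinj (by simpa using h)
    -- choose b > t avoiding all thresholds
    obtain ⟨b, hb1, hb2⟩ : ∃ b : ℝ≥0, t < b ∧ ¬ ∃ c ∈ ts, t < c ∧ c ≤ b := by
      set S := ts.filter (t < ·) with hS
      by_cases hSe : S.Nonempty
      · obtain ⟨b, hb1, hb2⟩ := exists_between (show t < S.min' hSe by
          have := S.min'_mem hSe
          exact (Finset.mem_filter.mp this).2)
        refine ⟨b, hb1, ?_⟩
        rintro ⟨c, hc, htc, hcb⟩
        have hcS : c ∈ S := Finset.mem_filter.mpr ⟨hc, htc⟩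
        exact absurd (le_trans (S.min'_le c hcS) hcb) (not_le.mpr hb2)
      · refine ⟨t + 1, lt_add_of_pos_right t one_pos, ?_⟩
        rintro ⟨c, hc, htc, _⟩
        exact hSe ⟨c, Finset.mem_filter.mpr ⟨hc, htc⟩⟩
    have hbij := hts t b hb1.le hb2
    haveI hsub : Subsingleton (C.obj b) := hC2 b (by
      rintro ⟨-, hbt⟩; exact absurd hbt (not_le.mpr hb1))
    exact hy0 (hbij.injOn hy (W.U t).zero_mem (Subsingleton.elim _ _))
  refine ⟨?_, key, ?_⟩
  · -- no nonzero injective morphism from a half-open interval module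
    rintro p q hsp hpq hqt P hP ⟨η, -, hne⟩
    obtain ⟨hP1, hP2, hP3⟩ := hP
    have hnat : ∀ a b : ℝ≥0, ∀ h : a ≤ b, ∀ w : P.obj a,
        (C.map (homOfLE h)) (η.app a w) = (η.app b) ((P.map (homOfLE h)) w) := by
      intro a b h w
      have hn := η.naturality (homOfLE h)
      exact (ConcreteCategory.congr_hom hn w).symm
    -- the image subpersistence
    set W : Subpersistence C := {
      U := fun r => LinearMap.range (η.app r).hom
      maps_mem := by
        rintro a b h x ⟨w, rfl⟩
        refine ⟨(P.map (homOfLE h)) w, ?_⟩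
        exact (hnat a b h w).symm } with hW
    have hcomp : IsCompactSub W := by
      constructor
      · -- tame with thresholds {p, q}
        refine ⟨{p, q}, ?_⟩
        intro a b h hno
        have hnp : ¬ (a < p ∧ p ≤ b) := fun ⟨h1, h2⟩ =>
          hno ⟨p, by simp, h1, h2⟩
        have hnq : ¬ (a < q ∧ q ≤ b) := fun ⟨h1, h2⟩ =>
          hno ⟨q, by simp, h1, h2⟩
        by_cases hbp : b < p
        · -- both a, b before p : subsingleton source
          haveI hsa : Subsingleton (P.obj a) := hP2 a (by
            rintro ⟨h1, -⟩
            exact absurd (ENNReal.coe_le_coe.mp h1) (not_le.mpr (lt_of_le_of_lt h hbp)))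
          haveI hsb : Subsingleton (P.obj b) := hP2 b (by
            rintro ⟨h1, -⟩
            exact absurd (ENNReal.coe_le_coe.mp h1) (not_le.mpr hbp))
          refine ⟨W.maps_mem a b h, ?_, ?_⟩
          · rintro x ⟨u, rfl⟩ y ⟨v, rfl⟩ -
            rw [Subsingleton.elim u v]
          · rintro y ⟨v, rfl⟩
            refine ⟨η.app a 0, ⟨0, rfl⟩, ?_⟩
            simp only [map_zero]
            rw [Subsingleton.elim v (0 : P.obj b)]
            simp
        · by_cases hqa : q ≤ a
          · -- both a, b after q : subsingleton source
            haveI hsa : Subsingleton (P.obj a) := hP2 a (by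
              rintro ⟨-, h2⟩
              exact absurd (ENNReal.coe_lt_coe.mp h2) (not_lt.mpr hqa))
            haveI hsb : Subsingleton (P.obj b) := hP2 b (by
              rintro ⟨-, h2⟩
              exact absurd (ENNReal.coe_lt_coe.mp h2) (not_lt.mpr (le_trans hqa h)))
            refine ⟨W.maps_mem a b h, ?_, ?_⟩
            · rintro x ⟨u, rfl⟩ y ⟨v, rfl⟩ -
              rw [Subsingleton.elim u v]
            · rintro y ⟨v, rfl⟩
              refine ⟨η.app a 0, ⟨0, rfl⟩, ?_⟩
              simp only [map_zero]
              rw [Subsingleton.elim v (0 : P.obj b)]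
              simp
          · -- p ≤ a and b < q : both structure maps are isos
            have hpa : p ≤ a := by
              by_contra h'
              exact hnp ⟨not_le.mp h', not_lt.mp hbp⟩
            have hbq : b < q := by
              by_contra h'
              exact hnq ⟨not_le.mp hqa, not_lt.mp h'⟩
            haveI hisoP : IsIso (P.map (homOfLE h)) :=
              hP3 a b h (ENNReal.coe_le_coe.mpr hpa) (ENNReal.coe_lt_coe.mpr hbq)
            haveI hisoC : IsIso (C.map (homOfLE h)) :=
              hC3 a b h (le_trans hsp hpa) (le_trans hbq.le hqt)
            have hinjC : Function.Injective (C.map (homOfLE h)) :=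
              (ModuleCat.mono_iff_injective _).mp inferInstance
            refine ⟨W.maps_mem a b h, fun x _ y _ hxy => hinjC hxy, ?_⟩
            rintro y ⟨v, rfl⟩
            refine ⟨η.app a (CategoryTheory.inv (P.map (homOfLE h)) v),
              ⟨_, rfl⟩, ?_⟩
            have h1 := hnat a b h (CategoryTheory.inv (P.map (homOfLE h)) v)
            have h2 : (P.map (homOfLE h)) (CategoryTheory.inv (P.map (homOfLE h)) v) = v := by
              have hh := CategoryTheory.IsIso.inv_hom_id (P.map (homOfLE h))
              exact ConcreteCategory.congr_hom hh v
            rw [h1, h2]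
      · intro r
        haveI := hfd r
        exact FiniteDimensional.finiteDimensional_submodule (W.U r)
    have hzero := key W hcomp
    apply hne
    ext r v
    have : η.app r v ∈ W.U r := ⟨v, rfl⟩
    rw [hzero r] at this
    simpa using this
  · -- not locally compact
    intro hLC
    -- C.obj s is nontrivial
    obtain ⟨v, hv⟩ : ∃ v : C.obj s, v ≠ 0 := by
      by_contra h
      push_neg at h
      haveI : Subsingleton (C.obj s) := subsingleton_iff_forall_eq 0 |>.mpr h
      have := hC1 s le_rfl hst.le
      rw [Module.finrank_zero_of_subsingleton] at this
      norm_num at this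
    obtain ⟨W, hvW, hWc⟩ := hLC s v
    rw [key W hWc s] at hvW
    exact hv (by simpa using hvW)
end

section
/- An arbitrary direct sum of locally compact persistence modules is locally compact. -/
open CategoryTheory CategoryTheory.Limits NNReal
open scoped ENNReal

noncomputable section Aux
open Classical

variable (ι : Type) (V : ι → PMod)

/-- projection onto the i-th summand -/
def proj (i : ι) : (∐ V) ⟶ V i :=
  Sigma.desc (fun j => if hji : j = i then eqToHom (congrArg V hji) else 0)

lemma proj_ι_self_apply (i : ι) (t : ℝ≥0) (x : (V i).obj t) :
    (proj ι V i).app t ((Sigma.ι V i).app t x) = x := by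
  have h : Sigma.ι V i ≫ proj ι V i = 𝟙 (V i) := by simp [proj]
  have h2 := ConcreteCategory.congr_hom (NatTrans.congr_app h t) x
  simpa using h2

lemma proj_ι_ne_apply (i j : ι) (hne : j ≠ i) (t : ℝ≥0) (x : (V j).obj t) :
    (proj ι V i).app t ((Sigma.ι V j).app t x) = 0 := by
  have h : Sigma.ι V j ≫ proj ι V i = 0 := by simp [proj, hne]
  have h2 := ConcreteCategory.congr_hom (NatTrans.congr_app h t) x
  simpa using h2

lemma range_top (t : ℝ≥0) :
    (⨆ i, LinearMap.range ((Sigma.ι V i).app t).hom) = ⊤ := by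
  set S := ⨆ i, LinearMap.range ((Sigma.ι V i).app t).hom with hS
  have hc := isColimitOfPreserves ((evaluation ℝ≥0 (ModuleCat ℚ)).obj t)
      (colimit.isColimit (Discrete.functor V))
  have h0 : (ModuleCat.ofHom S.mkQ : (∐ V).obj t ⟶ ModuleCat.of ℚ (_ ⧸ S)) = 0 := by
    apply hc.hom_ext
    rintro ⟨i⟩
    ext x
    show S.mkQ (((Sigma.ι V i).app t).hom x) = 0
    exact (Submodule.Quotient.mk_eq_zero S).2
      (le_iSup (fun i => LinearMap.range ((Sigma.ι V i).app t).hom) i ⟨x, rfl⟩)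
  have h0' : S.mkQ = 0 := congrArg ModuleCat.Hom.hom h0
  rw [← Submodule.ker_mkQ S, h0', LinearMap.ker_zero]

lemma sum_proj (t : ℝ≥0) (x : (∐ V).obj t) (s : Finset ι)
    (hx : ∀ i ∉ s, (proj ι V i).app t x = 0) :
    x = ∑ i ∈ s, (Sigma.ι V i).app t ((proj ι V i).app t x) := by
  have hx_top : x ∈ (⨆ i, LinearMap.range ((Sigma.ι V i).app t).hom) := by
    rw [range_top]; trivial
  rw [Submodule.mem_iSup_iff_exists_finsupp] at hx_top
  obtain ⟨g, hg, hgsum⟩ := hx_top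
  choose y hy using hg
  have hxsum : x = ∑ i ∈ g.support, (Sigma.ι V i).app t (y i) := by
    rw [← hgsum, Finsupp.sum]
    exact Finset.sum_congr rfl fun i _ => (hy i).symm
  have hproj_mem : ∀ j ∈ g.support, (proj ι V j).app t x = y j := by
    intro j hj
    rw [hxsum, map_sum]
    rw [Finset.sum_eq_single_of_mem j hj]
    · exact proj_ι_self_apply ι V j t (y j)
    · intro i _ hij
      exact proj_ι_ne_apply ι V j i hij t (y i)
  have hproj_zero : ∀ j ∉ g.support, (proj ι V j).app t x = 0 := by
    intro j hj
    rw [hxsum, map_sum, Finset.sum_eq_zero]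
    intro i hi
    exact proj_ι_ne_apply ι V j i (fun e => hj (e ▸ hi)) t (y i)
  have h1 : ∑ i ∈ s, (Sigma.ι V i).app t ((proj ι V i).app t x)
      = ∑ i ∈ s ∪ g.support, (Sigma.ι V i).app t ((proj ι V i).app t x) := by
    apply Finset.sum_subset Finset.subset_union_left
    intro i _ his
    rw [hx i his, map_zero]
  have h2 : ∑ i ∈ g.support, (Sigma.ι V i).app t ((proj ι V i).app t x)
      = ∑ i ∈ s ∪ g.support, (Sigma.ι V i).app t ((proj ι V i).app t x) := by
    apply Finset.sum_subset Finset.subset_union_right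
    intro i _ his
    rw [hproj_zero i his, map_zero]
  rw [h1, ← h2]
  rw [Finset.sum_congr rfl fun i hi => by rw [hproj_mem i hi]]
  exact hxsum

/-- the zero subpersistence -/
def zeroSub (M : PMod) : Subpersistence M where
  U := fun _ => ⊥
  maps_mem := fun a b h x hx => by
    rw [Submodule.mem_bot] at *
    rw [hx, map_zero]

lemma bijOn_bot {M N : Type*} [AddCommGroup M] [AddCommGroup N] [Module ℚ M] [Module ℚ N]
    (f : M →ₗ[ℚ] N) :
    Set.BijOn f ((⊥ : Submodule ℚ M) : Set M) ((⊥ : Submodule ℚ N) : Set N) := by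
  refine ⟨fun x hx => ?_, fun x hx y hy _ => ?_, fun y hy => ?_⟩
  · simp only [SetLike.mem_coe, Submodule.mem_bot] at *
    rw [hx, map_zero]
  · simp only [SetLike.mem_coe, Submodule.mem_bot] at hx hy
    rw [hx, hy]
  · simp only [SetLike.mem_coe, Submodule.mem_bot] at hy
    exact ⟨0, by simp, by rw [map_zero, hy]⟩

end Aux

/-- an arbitrary direct sum (coproduct, computed pointwise) of locally
compact persistence modules is locally compact. -/
theorem stmt8 (ι : Type) (V : ι → PMod) (h : ∀ i, LocallyCompact (V i)) :
    LocallyCompact (∐ V) := by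
  intro r v
  classical
  -- the finite support of v
  have hv_top : v ∈ (⨆ i, LinearMap.range ((Sigma.ι V i).app r).hom) := by
    rw [range_top]; trivial
  rw [Submodule.mem_iSup_iff_exists_finsupp] at hv_top
  obtain ⟨g, hg, hgsum⟩ := hv_top
  set T := g.support with hT
  -- choose compact neighbourhoods
  have hK : ∀ i : ι, ∃ K : Subpersistence (V i),
      ((proj ι V i).app r v ∈ K.U r) ∧ IsCompactSub K ∧ (i ∉ T → ∀ t, K.U t = ⊥) := by
    intro i
    by_cases hi : i ∈ T
    · obtain ⟨K, hmem, hcomp⟩ := h i r ((proj ι V i).app r v)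
      exact ⟨K, hmem, hcomp, fun hni => absurd hi hni⟩
    · refine ⟨zeroSub (V i), ?_, ?_, fun _ _ => rfl⟩
      · have hz : (proj ι V i).app r v = 0 := by
          choose y hy using hg
          have hxsum : v = ∑ j ∈ T, (Sigma.ι V j).app r (y j) := by
            rw [← hgsum, Finsupp.sum]
            exact Finset.sum_congr rfl fun j _ => (hy j).symm
          rw [hxsum, map_sum, Finset.sum_eq_zero]
          intro j hj
          exact proj_ι_ne_apply ι V i j (fun e => hi (e ▸ hj)) r (y j)
        rw [hz]; exact Submodule.zero_mem _
      · constructor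
        · exact ⟨∅, fun a b hab _ => bijOn_bot _⟩
        · intro t
          show FiniteDimensional ℚ ↥(⊥ : Submodule ℚ ((V i).obj t))
          infer_instance
  choose K hKmem hKcompact hKzero using hK
  choose ts hts using fun i => (hKcompact i).1
  -- the candidate subpersistence of the coproduct
  set W : Subpersistence (∐ V) :=
    { U := fun t => ⨅ i, Submodule.comap ((proj ι V i).app t).hom ((K i).U t)
      maps_mem := by
        intro a b hab x hx
        refine Submodule.mem_iInf _ |>.2 fun i => ?_
        have hxi := Submodule.mem_iInf _ |>.1 hx i
        rw [Submodule.mem_comap] at hxi ⊢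
        have h2 := NatTrans.naturality_apply (proj ι V i) (homOfLE hab) x
        rw [show ((proj ι V i).app b) (((∐ V).map (homOfLE hab)) x)
            = ((V i).map (homOfLE hab)) (((proj ι V i).app a) x) from h2]
        exact (K i).maps_mem a b hab _ hxi } with hW
  -- any element of W.U t is the sum of its T-components
  have hkey : ∀ (t : ℝ≥0) (x : (∐ V).obj t), x ∈ W.U t →
      x = ∑ i ∈ T, (Sigma.ι V i).app t ((proj ι V i).app t x) := by
    intro t x hx
    apply sum_proj
    intro i hi
    have := Submodule.mem_iInf _ |>.1 hx i
    rw [Submodule.mem_comap, hKzero i hi t, Submodule.mem_bot] at this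
    exact this
  refine ⟨W, ?_, ?_, ?_⟩
  · -- membership
    exact Submodule.mem_iInf _ |>.2 fun i => Submodule.mem_comap.2 (hKmem i)
  · -- tameness
    refine ⟨T.biUnion ts, ?_⟩
    intro a b hab hno
    have hbij : ∀ i, Set.BijOn ((V i).map (homOfLE hab))
        ((K i).U a : Set ((V i).obj a)) ((K i).U b : Set ((V i).obj b)) := by
      intro i
      by_cases hi : i ∈ T
      · refine hts i a b hab ?_
        rintro ⟨c, hc, h1, h2⟩
        exact hno ⟨c, Finset.mem_biUnion.2 ⟨i, hi, hc⟩, h1, h2⟩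
      · rw [hKzero i hi a, hKzero i hi b]
        exact bijOn_bot _
    have hcomm : ∀ (i : ι) (x : (∐ V).obj a),
        ((proj ι V i).app b) (((∐ V).map (homOfLE hab)) x)
          = ((V i).map (homOfLE hab)) (((proj ι V i).app a) x) := fun i x =>
      NatTrans.naturality_apply (proj ι V i) (homOfLE hab) x
    refine ⟨fun x hx => W.maps_mem a b hab x hx, ?_, ?_⟩
    · -- injOn
      intro x hx y hy hxy
      have hz : x - y ∈ W.U a := Submodule.sub_mem _ hx hy
      have hz0 : ((∐ V).map (homOfLE hab)) (x - y) = 0 := by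
        rw [map_sub, show ((∐ V).map (homOfLE hab)) x = ((∐ V).map (homOfLE hab)) y from hxy,
          sub_self]
      have hcomp : ∀ i, (proj ι V i).app a (x - y) = 0 := by
        intro i
        have h1 : ((V i).map (homOfLE hab)) ((proj ι V i).app a (x - y)) = 0 := by
          rw [← hcomm i (x - y), hz0, map_zero]
        have hmem : (proj ι V i).app a (x - y) ∈ ((K i).U a : Set ((V i).obj a)) :=
          Submodule.mem_iInf _ |>.1 hz i
        refine (hbij i).injOn hmem
          (Submodule.zero_mem ((K i).U a) : (0:(V i).obj a) ∈ ((K i).U a : Set _)) ?_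
        rw [h1, map_zero]
      have hz1 := hkey a (x - y) hz
      rw [Finset.sum_eq_zero (fun i _ => by rw [hcomp i, map_zero])] at hz1
      exact sub_eq_zero.1 hz1
    · -- surjOn
      intro ybar hybar
      have hybar' : ybar ∈ W.U b := hybar
      have hy_mem : ∀ i, (proj ι V i).app b ybar ∈ (K i).U b := fun i =>
        Submodule.mem_iInf _ |>.1 hybar' i
      have hpre : ∀ i, ∃ z ∈ (K i).U a,
          ((V i).map (homOfLE hab)) z = (proj ι V i).app b ybar := by
        intro i
        obtain ⟨z, hz1, hz2⟩ := (hbij i).surjOn (hy_mem i)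
        exact ⟨z, hz1, hz2⟩
      choose z hz1 hz2 using hpre
      set x := ∑ i ∈ T, (Sigma.ι V i).app a (z i) with hxdef
      have hprojx : ∀ j, (proj ι V j).app a x = if j ∈ T then z j else 0 := by
        intro j
        rw [hxdef, map_sum]
        by_cases hj : j ∈ T
        · rw [if_pos hj, Finset.sum_eq_single_of_mem j hj]
          · exact proj_ι_self_apply ι V j a (z j)
          · intro i _ hij
            exact proj_ι_ne_apply ι V j i hij a (z i)
        · rw [if_neg hj, Finset.sum_eq_zero]
          intro i hi
          exact proj_ι_ne_apply ι V j i (fun e => hj (e ▸ hi)) a (z i)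
      have hxmem : x ∈ W.U a := by
        refine Submodule.mem_iInf _ |>.2 fun i => Submodule.mem_comap.2 ?_
        rw [hprojx i]
        by_cases hi : i ∈ T
        · rw [if_pos hi]; exact hz1 i
        · rw [if_neg hi]; exact Submodule.zero_mem _
      refine ⟨x, hxmem, ?_⟩
      show ((∐ V).map (homOfLE hab)) x = ybar
      have hFx : ((∐ V).map (homOfLE hab)) x
          = ∑ i ∈ T, (Sigma.ι V i).app b ((proj ι V i).app b ybar) := by
        rw [hxdef, map_sum]
        refine Finset.sum_congr rfl fun i _ => ?_
        have hnat : ((∐ V).map (homOfLE hab)) (((Sigma.ι V i).app a) (z i))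
            = ((Sigma.ι V i).app b) (((V i).map (homOfLE hab)) (z i)) :=
          (NatTrans.naturality_apply (Sigma.ι V i) (homOfLE hab) (z i)).symm
        rw [hnat, hz2 i]
      rw [hFx, ← hkey b ybar hybar']
  · -- finite type
    intro t
    haveI hfin : ∀ i : T, FiniteDimensional ℚ ↥((K i).U t) := fun i => (hKcompact i).2 t
    let φ : ↥(W.U t) →ₗ[ℚ] (∀ i : T, ↥((K (i : ι)).U t)) :=
      { toFun := fun x => fun i => ⟨(proj ι V i).app t x.1,
          Submodule.mem_iInf _ |>.1 x.2 i⟩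
        map_add' := fun x y => by
          funext i
          apply Subtype.ext
          exact map_add _ _ _
        map_smul' := fun c x => by
          funext i
          apply Subtype.ext
          exact map_smul _ _ _ }
    have hφ : Function.Injective φ := by
      intro x y hxy
      have hc : ∀ i ∈ T, (proj ι V i).app t x.1 = (proj ι V i).app t y.1 := by
        intro i hi
        exact congrArg Subtype.val (congrFun hxy ⟨i, hi⟩)
      have hx := hkey t x.1 x.2
      have hy := hkey t y.1 y.2
      apply Subtype.ext
      rw [hx, hy]
      exact Finset.sum_congr rfl fun i hi => by rw [hc i hi]
    exact FiniteDimensional.of_injective φ hφ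
end

section
/- Every morphism of persistent cochain complexes having the right lifting property with respect to the generating set I = {S_{[s,t)}^k ↪ D_s^k : k ∈ ℕ, 0 ≤ s < t ≤ ∞} also has the right lifting property with respect to J = {D_t^k → D_s^k : 0 ≤ s < t < ∞} ∪ {0 → D_s^k : s ≥ 0}. -/
open CategoryTheory CategoryTheory.Limits NNReal
open scoped ENNReal

/-- Non-negatively graded cochain complexes of `ℚ`-vector spaces. -/
abbrev CC := CochainComplex (ModuleCat ℚ) ℕ

/-- Persistent cochain complexes. -/
abbrev PCC := ℝ≥0 ⥤ CC

/-- The sphere complex `S^k`: one copy of `ℚ` in degree `k`, zero elsewhere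
(characterized up to isomorphism). -/
def IsSphereC (C : CC) (k : ℕ) : Prop :=
  Module.finrank ℚ (C.X k) = 1 ∧ ∀ n, n ≠ k → Subsingleton (C.X n)

/-- The disk complex `D^k`: copies of `ℚ` in degrees `k-1` and `k` with the identity
differential (characterized up to isomorphism); by convention `D^0 = 0`. -/
def IsDiskC (C : CC) (k : ℕ) : Prop :=
  if k = 0 then ∀ n, Subsingleton (C.X n)
  else Module.finrank ℚ (C.X k) = 1 ∧ Module.finrank ℚ (C.X (k-1)) = 1 ∧
    (∀ n, n ≠ k → n ≠ k - 1 → Subsingleton (C.X n)) ∧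
    Function.Bijective (C.d (k-1) k)

/-- The persistent disk `D_s^k`: constant with value `D^k` on `[s,∞)`, zero before `s`. -/
def IsPDisk (D : PCC) (s : ℝ≥0) (k : ℕ) : Prop :=
  (∀ r : ℝ≥0, r < s → ∀ n, Subsingleton ((D.obj r).X n)) ∧
  (∀ r : ℝ≥0, s ≤ r → IsDiskC (D.obj r) k) ∧
  (∀ a b : ℝ≥0, ∀ h : a ≤ b, s ≤ a → IsIso (D.map (homOfLE h)))

/-- The interval sphere `S_{[s,t)}^k`: zero before `s`, the sphere `S^k` on `[s,t)`, the
disk `D^k` on `[t,∞)` (`t` may be `∞`), with structure maps isomorphisms within each of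
the two regions. -/
def IsPSphere (S : PCC) (s : ℝ≥0) (t : ℝ≥0∞) (k : ℕ) : Prop :=
  (∀ r : ℝ≥0, r < s → ∀ n, Subsingleton ((S.obj r).X n)) ∧
  (∀ r : ℝ≥0, s ≤ r → (r : ℝ≥0∞) < t → IsSphereC (S.obj r) k) ∧
  (∀ r : ℝ≥0, t ≤ (r : ℝ≥0∞) → IsDiskC (S.obj r) k) ∧
  (∀ a b : ℝ≥0, ∀ h : a ≤ b, s ≤ a → ((b : ℝ≥0∞) < t ∨ t ≤ (a : ℝ≥0∞)) →
    IsIso (S.map (homOfLE h)))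

/-- The canonical inclusion `S_{[s,t)}^k ↪ D_s^k`: in the sphere region it is injective
in degree `k` (identifying `S^k` with the cocycles of `D^k`), and from time `t` on it is
an isomorphism. -/
def IsSphereDiskIncl (S D : PCC) (s : ℝ≥0) (t : ℝ≥0∞) (k : ℕ) (i : S ⟶ D) : Prop :=
  IsPSphere S s t k ∧ IsPDisk D s k ∧
  (k ≠ 0 → ∀ r : ℝ≥0, s ≤ r → (r : ℝ≥0∞) < t → Function.Injective ((i.app r).f k)) ∧
  (∀ r : ℝ≥0, t ≤ (r : ℝ≥0∞) → IsIso (i.app r))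

/-- The canonical inclusion `D_t^k ↪ D_s^k` for `s ≤ t`: an isomorphism from time `t`
on. -/
def IsDiskIncl (Dt Ds : PCC) (s t : ℝ≥0) (k : ℕ) (i : Dt ⟶ Ds) : Prop :=
  s ≤ t ∧ IsPDisk Dt t k ∧ IsPDisk Ds s k ∧
  (∀ r : ℝ≥0, t ≤ r → IsIso (i.app r))

/-- The zero persistent cochain complex, characterized up to isomorphism. -/
def IsZeroP (Z : PCC) : Prop := ∀ (r : ℝ≥0) (n : ℕ), Subsingleton ((Z.obj r).X n)

namespace Stmt15Aux
open HomologicalComplex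

lemma mhext {M N : ModuleCat ℚ} (h : Subsingleton M) (f g : M ⟶ N) : f = g :=
  ModuleCat.hom_ext (LinearMap.ext fun x => by rw [Subsingleton.elim x 0, map_zero, map_zero])

lemma mzero {M N : ModuleCat ℚ} (h : Subsingleton N) (f : M ⟶ N) : f = 0 :=
  ModuleCat.hom_ext (LinearMap.ext fun _ => Subsingleton.elim _ _)

lemma miso {M N : ModuleCat ℚ} (hM : Subsingleton M) (hN : Subsingleton N) (f : M ⟶ N) :
    IsIso f := ⟨0, mhext hM _ _, mhext hN _ _⟩

lemma msub {M N : ModuleCat ℚ} (h : M = N) (hM : Subsingleton M) : Subsingleton N := h ▸ hM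

lemma mrank {M N : ModuleCat ℚ} (h : M = N) : Module.finrank ℚ M = Module.finrank ℚ N := by rw [h]

/-- components-to-iso for cochain complexes -/
lemma ccIso {C D : CC} (φ : C ⟶ D) (h : ∀ n, IsIso (φ.f n)) : IsIso φ := by
  have : ∀ n, IsIso (φ.f n) := h
  exact HomologicalComplex.Hom.isIso_of_components φ

noncomputable def Pz : ModuleCat ℚ := ModuleCat.of ℚ PUnit

instance : Subsingleton Pz := inferInstanceAs (Subsingleton PUnit)

section Twoc
variable (m : ℕ) (A B : ModuleCat ℚ) (δ : A ⟶ B)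

noncomputable def twocX : ℕ → ModuleCat ℚ := fun n =>
  if n = m then A else if n = m + 1 then B else Pz

lemma twocX_fst : twocX m A B m = A := if_pos rfl
lemma twocX_snd : twocX m A B (m+1) = B := by
  have h1 : m + 1 ≠ m := by omega
  simp [twocX, h1]
lemma twocX_sub (n : ℕ) (h1 : n ≠ m) (h2 : n ≠ m + 1) : Subsingleton (twocX m A B n) := by
  simp only [twocX, if_neg h1, if_neg h2]; infer_instance

noncomputable def twocD : ∀ n, twocX m A B n ⟶ twocX m A B (n + 1) := fun n =>
  if h : n = m then
    eqToHom (by rw [h, twocX_fst]) ≫ δ ≫ eqToHom (by rw [h, twocX_snd])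
  else 0

noncomputable abbrev twoc : CC :=
  CochainComplex.of (twocX m A B) (twocD m A B δ) (by
    intro n
    by_cases h : n = m
    · subst h
      have h2 : twocD n A B δ (n+1) = 0 := dif_neg (by omega)
      rw [h2, comp_zero]
    · have h2 : twocD m A B δ n = 0 := dif_neg h
      rw [h2, zero_comp])

lemma twoc_X (n : ℕ) : (twoc m A B δ).X n = twocX m A B n := rfl

lemma twoc_d_self : (twoc m A B δ).d m (m+1) =
    eqToHom (twocX_fst m A B) ≫ δ ≫ eqToHom (twocX_snd m A B).symm := by
  unfold twoc
  show CochainComplex.of.d (twocX m A B) (twocD m A B δ) m (m+1) = _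
  rw [CochainComplex.of_d]
  simp [twocD]

lemma twoc_d_zero (i j : ℕ) (h : i ≠ m) : (twoc m A B δ).d i j = 0 := by
  by_cases hij : i + 1 = j
  · subst hij
    unfold twoc
    show CochainComplex.of.d (twocX m A B) (twocD m A B δ) i (i+1) = 0
    rw [CochainComplex.of_d]
    exact dif_neg h
  · exact HomologicalComplex.shape _ i j hij

lemma twoc_sub (n : ℕ) (h1 : n ≠ m) (h2 : n ≠ m + 1) : Subsingleton ((twoc m A B δ).X n) :=
  twocX_sub m A B n h1 h2

end Twoc

section Hom
variable {m : ℕ} {A B : ModuleCat ℚ} {δ : A ⟶ B}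

/-- Chain map out of `twoc` from its two nontrivial components. -/
noncomputable def twocHom {K : CC} (φ : A ⟶ K.X m) (ψ : B ⟶ K.X (m+1))
    (h : δ ≫ ψ = φ ≫ K.d m (m+1)) (h' : ψ ≫ K.d (m+1) (m+2) = 0) :
    twoc m A B δ ⟶ K where
  f n :=
    if hn : n = m then
      eqToHom (by rw [hn, twoc_X, twocX_fst]) ≫ φ ≫ eqToHom (by rw [hn])
    else if hn1 : n = m + 1 then
      eqToHom (by rw [hn1, twoc_X, twocX_snd]) ≫ ψ ≫ eqToHom (by rw [hn1])
    else 0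
  comm' i j hij := by
    change i + 1 = j at hij
    subst hij
    by_cases hi : i = m
    · subst hi
      have h1 : i + 1 ≠ i := by omega
      rw [dif_pos rfl, dif_neg h1, dif_pos rfl, twoc_d_self]
      simp only [eqToHom_refl, Category.comp_id, Category.id_comp, Category.assoc]
      rw [← h]
      simp
    · by_cases hi1 : i = m + 1
      · subst hi1
        have h1 : m + 1 ≠ m := by omega
        have h2 : m + 1 + 1 ≠ m := by omega
        have h3 : m + 1 + 1 ≠ m + 1 := by omega
        rw [dif_neg h1, dif_pos rfl, dif_neg h2, dif_neg h3,
          twoc_d_zero m A B δ _ _ h1]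
        simp only [eqToHom_refl, Category.comp_id, Category.id_comp, zero_comp,
          Category.assoc, h']
        simp
      · rw [dif_neg hi, dif_neg hi1, twoc_d_zero m A B δ _ _ hi]
        simp

@[simp] lemma twocHom_f_fst {K : CC} (φ : A ⟶ K.X m) (ψ : B ⟶ K.X (m+1))
    (h : δ ≫ ψ = φ ≫ K.d m (m+1)) (h' : ψ ≫ K.d (m+1) (m+2) = 0) :
    (twocHom φ ψ h h').f m = eqToHom (twocX_fst m A B) ≫ φ := by
  show dite _ _ _ = _
  rw [dif_pos rfl]
  simp

@[simp] lemma twocHom_f_snd {K : CC} (φ : A ⟶ K.X m) (ψ : B ⟶ K.X (m+1))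
    (h : δ ≫ ψ = φ ≫ K.d m (m+1)) (h' : ψ ≫ K.d (m+1) (m+2) = 0) :
    (twocHom φ ψ h h').f (m+1) = eqToHom (twocX_snd m A B) ≫ ψ := by
  show dite _ _ _ = _
  rw [dif_neg (by omega : m + 1 ≠ m), dif_pos rfl]
  simp

lemma twocHom_ext {K : CC} (F G : twoc m A B δ ⟶ K)
    (h1 : F.f m = G.f m) (h2 : F.f (m+1) = G.f (m+1)) : F = G := by
  apply HomologicalComplex.hom_ext
  intro n
  by_cases hn : n = m
  · subst hn; exact h1
  · by_cases hn1 : n = m + 1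
    · subst hn1; exact h2
    · exact mhext (twoc_sub m A B δ n hn hn1) _ _


end Hom

section Map
variable {m : ℕ} {A B A' B' : ModuleCat ℚ} {δ : A ⟶ B} {δ' : A' ⟶ B'}

/-- map between twoc's -/
noncomputable def twocMap (a : A ⟶ A') (b : B ⟶ B') (w : δ ≫ b = a ≫ δ') :
    twoc m A B δ ⟶ twoc m A' B' δ' :=
  twocHom (a ≫ eqToHom (twocX_fst m A' B').symm) (b ≫ eqToHom (twocX_snd m A' B').symm)
    (by rw [twoc_d_self]
        slice_rhs 2 3 => rw [eqToHom_trans, eqToHom_refl]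
        simp [reassoc_of% w])
    (by rw [twoc_d_zero m A' B' δ' _ _ (by omega : m + 1 ≠ m), comp_zero])

@[simp] lemma twocMap_f_fst (a : A ⟶ A') (b : B ⟶ B') (w : δ ≫ b = a ≫ δ') :
    (twocMap a b w : twoc m A B δ ⟶ _).f m =
      eqToHom (twocX_fst m A B) ≫ a ≫ eqToHom (twocX_fst m A' B').symm := by
  simp [twocMap]

@[simp] lemma twocMap_f_snd (a : A ⟶ A') (b : B ⟶ B') (w : δ ≫ b = a ≫ δ') :
    (twocMap a b w : twoc m A B δ ⟶ _).f (m+1) =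
      eqToHom (twocX_snd m A B) ≫ b ≫ eqToHom (twocX_snd m A' B').symm := by
  simp [twocMap]

end Map

/-- degree `n` part of a persistent complex -/
noncomputable abbrev evP (P : PCC) (n : ℕ) : ℝ≥0 ⥤ ModuleCat ℚ where
  obj r := (P.obj r).X n
  map h := (P.map h).f n
  map_id r := by rw [CategoryTheory.Functor.map_id]; rfl
  map_comp h h' := by rw [CategoryTheory.Functor.map_comp]; rfl

section PFunctor
variable (m : ℕ) (A B : ℝ≥0 ⥤ ModuleCat ℚ) (δ : A ⟶ B)

/-- persistent two-term complex -/
noncomputable abbrev twocP : PCC where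
  obj r := twoc m (A.obj r) (B.obj r) (δ.app r)
  map {r r'} h := twocMap (A.map h) (B.map h) (δ.naturality h).symm
  map_id r := by
    apply twocHom_ext
    · simp [CategoryTheory.Functor.map_id]
    · simp [CategoryTheory.Functor.map_id]
  map_comp {r r' r''} h h' := by
    apply twocHom_ext
    · simp [CategoryTheory.Functor.map_comp]
    · simp [CategoryTheory.Functor.map_comp]

lemma twocP_map_f_fst {r r' : ℝ≥0} (h : r ⟶ r') :
    ((twocP m A B δ).map h).f m =
      eqToHom (twocX_fst m _ _) ≫ A.map h ≫ eqToHom (twocX_fst m _ _).symm :=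
  twocMap_f_fst (A.map h) (B.map h) (δ.naturality h).symm

lemma twocP_map_f_snd {r r' : ℝ≥0} (h : r ⟶ r') :
    ((twocP m A B δ).map h).f (m+1) =
      eqToHom (twocX_snd m _ _) ≫ B.map h ≫ eqToHom (twocX_snd m _ _).symm :=
  twocMap_f_snd (A.map h) (B.map h) (δ.naturality h).symm

variable {m A B δ} in
lemma twocPHom_ext {W : PCC} (F G : twocP m A B δ ⟶ W)
    (h1 : ∀ r, (F.app r).f m = (G.app r).f m)
    (h2 : ∀ r, (F.app r).f (m+1) = (G.app r).f (m+1)) : F = G := by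
  apply NatTrans.ext
  funext r
  exact twocHom_ext _ _ (h1 r) (h2 r)

/-- morphism of persistent complexes out of `twocP` -/
noncomputable def twocPHom {W : PCC}
    (φ : A ⟶ evP W m)
    (ψ : B ⟶ evP W (m+1))
    (h : ∀ r, δ.app r ≫ ψ.app r = φ.app r ≫ (W.obj r).d m (m+1))
    (h' : ∀ r, ψ.app r ≫ (W.obj r).d (m+1) (m+2) = 0) :
    twocP m A B δ ⟶ W where
  app r := twocHom (φ.app r) (ψ.app r) (h r) (h' r)
  naturality {r r'} hr := by
    apply twocHom_ext
    · show ((twocP m A B δ).map hr ≫ _).f m = _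
      rw [HomologicalComplex.comp_f, HomologicalComplex.comp_f, twocP_map_f_fst,
        twocHom_f_fst, twocHom_f_fst]
      have := φ.naturality hr
      simp only [Category.assoc, eqToHom_trans_assoc, eqToHom_refl, Category.id_comp]
      rw [this]
    · show ((twocP m A B δ).map hr ≫ _).f (m+1) = _
      rw [HomologicalComplex.comp_f, HomologicalComplex.comp_f, twocP_map_f_snd,
        twocHom_f_snd, twocHom_f_snd]
      have := ψ.naturality hr
      simp only [Category.assoc, eqToHom_trans_assoc, eqToHom_refl, Category.id_comp]
      rw [this]

@[simp] lemma twocPHom_app_f_fst {W : PCC}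
    (φ : A ⟶ evP W m)
    (ψ : B ⟶ evP W (m+1))
    (h : ∀ r, δ.app r ≫ ψ.app r = φ.app r ≫ (W.obj r).d m (m+1))
    (h' : ∀ r, ψ.app r ≫ (W.obj r).d (m+1) (m+2) = 0) (r : ℝ≥0) :
    ((twocPHom m A B δ φ ψ h h').app r).f m = eqToHom (twocX_fst m _ _) ≫ φ.app r :=
  twocHom_f_fst (φ.app r) (ψ.app r) (h r) (h' r)

@[simp] lemma twocPHom_app_f_snd {W : PCC}
    (φ : A ⟶ evP W m)
    (ψ : B ⟶ evP W (m+1))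
    (h : ∀ r, δ.app r ≫ ψ.app r = φ.app r ≫ (W.obj r).d m (m+1))
    (h' : ∀ r, ψ.app r ≫ (W.obj r).d (m+1) (m+2) = 0) (r : ℝ≥0) :
    ((twocPHom m A B δ φ ψ h h').app r).f (m+1) = eqToHom (twocX_snd m _ _) ≫ ψ.app r :=
  twocHom_f_snd (φ.app r) (ψ.app r) (h r) (h' r)

end PFunctor

section Pred
variable (m : ℕ) (A B : ℝ≥0 ⥤ ModuleCat ℚ) (δ : A ⟶ B)

lemma bij_of_isIso {M N : ModuleCat ℚ} (f : M ⟶ N) (h : IsIso f) : Function.Bijective f :=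
  (ConcreteCategory.isIso_iff_bijective f).mp h

lemma isIso_of_bij {M N : ModuleCat ℚ} (f : M ⟶ N) (h : Function.Bijective f) : IsIso f :=
  (ConcreteCategory.isIso_iff_bijective f).mpr h

lemma isIso_twocP_map {r r' : ℝ≥0} (h : r ⟶ r')
    (hA : IsIso (A.map h)) (hB : IsIso (B.map h)) : IsIso ((twocP m A B δ).map h) := by
  haveI := hA; haveI := hB
  apply ccIso
  intro n
  by_cases hn : n = m
  · subst hn; rw [twocP_map_f_fst]; infer_instance
  · by_cases hn1 : n = m + 1
    · subst hn1; rw [twocP_map_f_snd]; infer_instance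
    · exact miso (twoc_sub _ _ _ _ n hn hn1) (twoc_sub _ _ _ _ n hn hn1) _

lemma twocP_sub_fst (r : ℝ≥0) (hA : Subsingleton (A.obj r)) :
    Subsingleton (((twocP m A B δ).obj r).X m) := by
  show Subsingleton (twocX m (A.obj r) (B.obj r) m)
  rw [twocX_fst]; exact hA

lemma twocP_sub_snd (r : ℝ≥0) (hB : Subsingleton (B.obj r)) :
    Subsingleton (((twocP m A B δ).obj r).X (m+1)) := by
  show Subsingleton (twocX m (A.obj r) (B.obj r) (m+1))
  rw [twocX_snd]; exact hB

lemma twocP_rank_fst (r : ℝ≥0) (hA : Module.finrank ℚ (A.obj r) = 1) :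
    Module.finrank ℚ (((twocP m A B δ).obj r).X m) = 1 := by
  show Module.finrank ℚ (twocX m (A.obj r) (B.obj r) m) = 1
  rw [twocX_fst]; exact hA

lemma twocP_rank_snd (r : ℝ≥0) (hB : Module.finrank ℚ (B.obj r) = 1) :
    Module.finrank ℚ (((twocP m A B δ).obj r).X (m+1)) = 1 := by
  show Module.finrank ℚ (twocX m (A.obj r) (B.obj r) (m+1)) = 1
  rw [twocX_snd]; exact hB

lemma twocP_sub_all (r : ℝ≥0) (hA : Subsingleton (A.obj r)) (hB : Subsingleton (B.obj r))
    (n : ℕ) : Subsingleton (((twocP m A B δ).obj r).X n) := by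
  by_cases hn : n = m
  · subst hn; exact twocP_sub_fst _ A B δ r hA
  · by_cases hn1 : n = m + 1
    · subst hn1; exact twocP_sub_snd _ A B δ r hB
    · exact twoc_sub _ _ _ _ n hn hn1

lemma twocP_d_bij (r : ℝ≥0) (hd : Function.Bijective (δ.app r)) :
    Function.Bijective (((twocP m A B δ).obj r).d m (m+1)) := by
  haveI : IsIso (δ.app r) := isIso_of_bij _ hd
  apply bij_of_isIso
  show IsIso ((twoc m (A.obj r) (B.obj r) (δ.app r)).d m (m+1))
  rw [twoc_d_self]
  infer_instance

lemma isDiskC_twocP (r : ℝ≥0) (hA : Module.finrank ℚ (A.obj r) = 1)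
    (hB : Module.finrank ℚ (B.obj r) = 1) (hd : Function.Bijective (δ.app r)) :
    IsDiskC ((twocP m A B δ).obj r) (m+1) := by
  rw [IsDiskC, if_neg (Nat.succ_ne_zero m)]
  refine ⟨twocP_rank_snd m A B δ r hB, twocP_rank_fst m A B δ r hA, ?_, ?_⟩
  · intro n hn1 hn
    exact twoc_sub _ _ _ _ n hn hn1
  · exact twocP_d_bij m A B δ r hd

lemma isPSphere_twocP (s : ℝ≥0) (T : ℝ≥0∞) (hsT : (s : ℝ≥0∞) < T)
    (hA1 : ∀ r : ℝ≥0, (r : ℝ≥0∞) < T → Subsingleton (A.obj r))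
    (hA2 : ∀ r : ℝ≥0, T ≤ (r : ℝ≥0∞) → Module.finrank ℚ (A.obj r) = 1)
    (hB0 : ∀ r : ℝ≥0, r < s → Subsingleton (B.obj r))
    (hB1 : ∀ r : ℝ≥0, s ≤ r → Module.finrank ℚ (B.obj r) = 1)
    (hd : ∀ r : ℝ≥0, T ≤ (r : ℝ≥0∞) → Function.Bijective (δ.app r))
    (hAiso : ∀ (a b : ℝ≥0) (h : a ≤ b), T ≤ (a : ℝ≥0∞) → IsIso (A.map (homOfLE h)))
    (hBiso : ∀ (a b : ℝ≥0) (h : a ≤ b), s ≤ a → IsIso (B.map (homOfLE h))) :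
    IsPSphere (twocP m A B δ) s T (m+1) := by
  have hle : ∀ r : ℝ≥0, T ≤ (r : ℝ≥0∞) → s ≤ r := by
    intro r hr
    exact_mod_cast le_of_lt (lt_of_lt_of_le hsT hr)
  refine ⟨?_, ?_, ?_, ?_⟩
  · intro r hr n
    exact twocP_sub_all m A B δ r
      (hA1 r (lt_trans (ENNReal.coe_lt_coe.mpr hr) hsT)) (hB0 r hr) n
  · intro r hrs hrT
    refine ⟨twocP_rank_snd m A B δ r (hB1 r hrs), ?_⟩
    intro n hn
    by_cases hnm : n = m
    · subst hnm; exact twocP_sub_fst _ A B δ r (hA1 r hrT)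
    · exact twoc_sub _ _ _ _ n hnm hn
  · intro r hrT
    exact isDiskC_twocP m A B δ r (hA2 r hrT) (hB1 r (hle r hrT)) (hd r hrT)
  · intro a b h hsa hcase
    apply isIso_twocP_map
    · rcases hcase with hb | ha
      · exact miso (hA1 a (lt_of_le_of_lt (ENNReal.coe_le_coe.mpr h) hb))
          (hA1 b hb) _
      · exact hAiso a b h ha
    · exact hBiso a b h hsa

lemma isPDisk_twocP (L : ℝ≥0 ⥤ ModuleCat ℚ) (s : ℝ≥0)
    (h0 : ∀ r : ℝ≥0, r < s → Subsingleton (L.obj r))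
    (h1 : ∀ r : ℝ≥0, s ≤ r → Module.finrank ℚ (L.obj r) = 1)
    (hiso : ∀ (a b : ℝ≥0) (h : a ≤ b), s ≤ a → IsIso (L.map (homOfLE h))) :
    IsPDisk (twocP m L L (𝟙 L)) s (m+1) := by
  refine ⟨?_, ?_, ?_⟩
  · intro r hr n
    exact twocP_sub_all m L L (𝟙 L) r (h0 r hr) (h0 r hr) n
  · intro r hrs
    exact isDiskC_twocP m L L (𝟙 L) r (h1 r hrs) (h1 r hrs)
      (by show Function.Bijective (𝟙 (L.obj r)); exact bij_of_isIso _ inferInstance)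
  · intro a b h hsa
    exact isIso_twocP_map m L L (𝟙 L) _ (hiso a b h hsa) (hiso a b h hsa)

end Pred

section Helpers

/-- evaluation functor -/
noncomputable abbrev ev (n : ℕ) : CC ⥤ ModuleCat ℚ :=
  HomologicalComplex.eval (ModuleCat ℚ) (ComplexShape.up ℕ) n

/-- degreewise components of a morphism of persistent complexes -/
noncomputable def jf {P Q : PCC} (w : P ⟶ Q) (n : ℕ) : (evP P n) ⟶ (evP Q n) where
  app r := (w.app r).f n
  naturality r r' hr := by
    have h := congrArg (fun t => HomologicalComplex.Hom.f t n) (w.naturality hr)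
    simp only [HomologicalComplex.comp_f] at h
    exact h

@[simp] lemma jf_app {P Q : PCC} (w : P ⟶ Q) (n : ℕ) (r : ℝ≥0) :
    (jf w n).app r = (w.app r).f n := rfl

/-- the differential as a natural transformation -/
noncomputable def dP (P : PCC) (i j' : ℕ) : (evP P i) ⟶ (evP P j') where
  app r := (P.obj r).d i j'
  naturality r r' hr := (P.map hr).comm i j'

@[simp] lemma dP_app (P : PCC) (i j' : ℕ) (r : ℝ≥0) :
    (dP P i j').app r = (P.obj r).d i j' := rfl

lemma isIso_f_of_isIso {C D : CC} (w : C ⟶ D) (h : IsIso w) (n : ℕ) : IsIso (w.f n) := by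
  haveI := h
  change IsIso ((ev n).map w)
  infer_instance

lemma eqToHom_zero_cancel {M N P : ModuleCat ℚ} (h : M = N) {a : N ⟶ P}
    (hh : eqToHom h ≫ a = 0) : a = 0 := by
  subst h; simpa using hh

lemma cancel_eqToHom {M N P : ModuleCat ℚ} (h : M = N) {a b : N ⟶ P}
    (hab : eqToHom h ≫ a = eqToHom h ≫ b) : a = b := by
  rwa [cancel_epi] at hab

/-- morphisms of persistent complexes agree if the source is degreewise subsingleton -/
lemma pcc_hom_ext {P Q : PCC} (h : ∀ (r : ℝ≥0) (n : ℕ), Subsingleton ((P.obj r).X n))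
    (F G : P ⟶ Q) : F = G := by
  apply NatTrans.ext
  funext r
  apply HomologicalComplex.hom_ext
  intro n
  exact mhext (h r n) _ _

end Helpers

section EIso
variable (m : ℕ) (A B : ℝ≥0 ⥤ ModuleCat ℚ) (δ : A ⟶ B)

/-- identification of the first slot of `twocP` -/
noncomputable def eFstP : A ⟶ (evP (twocP m A B δ) m) where
  app r := eqToHom (twocX_fst m (A.obj r) (B.obj r)).symm
  naturality r r' hr := by
    show A.map hr ≫ _ = _ ≫ ((twocP m A B δ).map hr).f m
    rw [twocP_map_f_fst]
    simp

/-- identification of the second slot of `twocP` -/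
noncomputable def eSndP : B ⟶ (evP (twocP m A B δ) (m+1)) where
  app r := eqToHom (twocX_snd m (A.obj r) (B.obj r)).symm
  naturality r r' hr := by
    show B.map hr ≫ _ = _ ≫ ((twocP m A B δ).map hr).f (m+1)
    rw [twocP_map_f_snd]
    simp

@[simp] lemma eFstP_app (r : ℝ≥0) :
    (eFstP m A B δ).app r = eqToHom (twocX_fst m (A.obj r) (B.obj r)).symm := rfl

@[simp] lemma eSndP_app (r : ℝ≥0) :
    (eSndP m A B δ).app r = eqToHom (twocX_snd m (A.obj r) (B.obj r)).symm := rfl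

end EIso

section Facts

lemma disk_sub {D : PCC} {s : ℝ≥0} {k : ℕ} (hD : IsPDisk D s k) (r : ℝ≥0) (n : ℕ)
    (h1 : n ≠ k) (h2 : n ≠ k - 1) : Subsingleton ((D.obj r).X n) := by
  rcases lt_or_ge r s with h | h
  · exact hD.1 r h n
  · have hc := hD.2.1 r h
    rw [IsDiskC] at hc
    split_ifs at hc with hk
    · exact hc n
    · exact hc.2.2.1 n h1 h2

lemma disk_sub0 {D : PCC} {s : ℝ≥0} (hD : IsPDisk D s 0) (r : ℝ≥0) (n : ℕ) :
    Subsingleton ((D.obj r).X n) := by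
  rcases lt_or_ge r s with h | h
  · exact hD.1 r h n
  · have hc := hD.2.1 r h
    rw [IsDiskC, if_pos rfl] at hc
    exact hc n

lemma disk_rank_top {D : PCC} {s : ℝ≥0} {q : ℕ} (hD : IsPDisk D s (q+1)) (r : ℝ≥0)
    (h : s ≤ r) : Module.finrank ℚ ((D.obj r).X (q+1)) = 1 := by
  have hc := hD.2.1 r h
  rw [IsDiskC, if_neg (Nat.succ_ne_zero q)] at hc
  exact hc.1

lemma disk_rank_low {D : PCC} {s : ℝ≥0} {q : ℕ} (hD : IsPDisk D s (q+1)) (r : ℝ≥0)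
    (h : s ≤ r) : Module.finrank ℚ ((D.obj r).X q) = 1 := by
  have hc := hD.2.1 r h
  rw [IsDiskC, if_neg (Nat.succ_ne_zero q)] at hc
  exact hc.2.1

lemma disk_d_bij {D : PCC} {s : ℝ≥0} {q : ℕ} (hD : IsPDisk D s (q+1)) (r : ℝ≥0)
    (h : s ≤ r) : Function.Bijective ((D.obj r).d q (q+1)) := by
  have hc := hD.2.1 r h
  rw [IsDiskC, if_neg (Nat.succ_ne_zero q)] at hc
  exact hc.2.2.2

end Facts

section Key

variable {X Y : PCC} (f : X ⟶ Y) (s : ℝ≥0) (q : ℕ) {Ds : PCC} (hDs : IsPDisk Ds s (q+1))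
  (T : ℝ≥0∞) (hsT : (s : ℝ≥0∞) < T) {V : PCC} (j : V ⟶ Ds)
  (hV1 : ∀ r : ℝ≥0, (r : ℝ≥0∞) < T → ∀ n, Subsingleton ((V.obj r).X n))
  (hV2 : ∀ r : ℝ≥0, T ≤ (r : ℝ≥0∞) → IsDiskC (V.obj r) (q+1))
  (hV3 : ∀ (a b : ℝ≥0) (h : a ≤ b), T ≤ (a : ℝ≥0∞) → IsIso (V.map (homOfLE h)))
  (hj : ∀ r : ℝ≥0, T ≤ (r : ℝ≥0∞) → IsIso (j.app r))
  (u : V ⟶ X) (v : Ds ⟶ Y) (huv : u ≫ f = j ≫ v)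
  (hI : ∀ (s' : ℝ≥0) (t' : ℝ≥0∞) (k : ℕ) (S D : PCC) (i : S ⟶ D),
      (s' : ℝ≥0∞) < t' → IsSphereDiskIncl S D s' t' k i → HasLiftingProperty i f)

include hDs hsT hV1 hV2 hV3 hj huv hI in
lemma liftAux :
    ∃ xi : (evP Ds (q+1)) ⟶ (evP X (q+1)),
      (∀ r : ℝ≥0, (j.app r).f (q+1) ≫ xi.app r = (u.app r).f (q+1)) ∧
      (∀ r : ℝ≥0, xi.app r ≫ (f.app r).f (q+1) = (v.app r).f (q+1)) ∧
      (∀ r : ℝ≥0, xi.app r ≫ (X.obj r).d (q+1) (q+1+1) = 0) := by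
  have hles : ∀ r : ℝ≥0, T ≤ (r : ℝ≥0∞) → s ≤ r := fun r hr => by
    exact_mod_cast le_of_lt (lt_of_lt_of_le hsT hr)
  have hVsub : ∀ (r : ℝ≥0) (n : ℕ), n ≠ q + 1 → n ≠ q → Subsingleton ((V.obj r).X n) := by
    intro r n h1 h2
    rcases lt_or_ge (r : ℝ≥0∞) T with h | h
    · exact hV1 r h n
    · have hc := hV2 r h
      rw [IsDiskC, if_neg (Nat.succ_ne_zero q)] at hc
      exact hc.2.2.1 n h1 h2
  have hVrank : ∀ r : ℝ≥0, T ≤ (r : ℝ≥0∞) →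
      Module.finrank ℚ ((V.obj r).X (q+1)) = 1 := by
    intro r h
    have hc := hV2 r h
    rw [IsDiskC, if_neg (Nat.succ_ne_zero q)] at hc
    exact hc.1
  have hDsub : ∀ (r : ℝ≥0) (n : ℕ), n ≠ q + 1 → n ≠ q → Subsingleton ((Ds.obj r).X n) :=
    fun r n h1 h2 => disk_sub hDs r n h1 h2
  -- the three morphisms of the auxiliary lifting square
  have hcomm_incl : ∀ r : ℝ≥0, (jf j (q+1)).app r ≫
      (eSndP (q+1) (evP Ds (q+1)) (evP Ds (q+1)) (𝟙 _)).app r =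
      ((jf j (q+1)) ≫ eFstP (q+1) (evP Ds (q+1)) (evP Ds (q+1)) (𝟙 _)).app r ≫
        ((twocP (q+1) (evP Ds (q+1)) (evP Ds (q+1)) (𝟙 _)).obj r).d (q+1) (q+1+1) := by
    intro r
    show _ = _ ≫ (twoc (q+1) _ _ _).d (q+1) (q+1+1)
    rw [twoc_d_self]
    simp
  have hd2_incl : ∀ r : ℝ≥0,
      (eSndP (q+1) (evP Ds (q+1)) (evP Ds (q+1)) (𝟙 _)).app r ≫
      ((twocP (q+1) (evP Ds (q+1)) (evP Ds (q+1)) (𝟙 _)).obj r).d (q+1+1) (q+1+1+1) = 0 := by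
    intro r
    show _ ≫ (twoc (q+1) _ _ _).d (q+1+1) (q+1+1+1) = 0
    rw [twoc_d_zero _ _ _ _ _ _ (by omega), comp_zero]
  set incl : twocP (q+1) (evP V (q+1)) (evP Ds (q+1)) (jf j (q+1)) ⟶
      twocP (q+1) (evP Ds (q+1)) (evP Ds (q+1)) (𝟙 _) :=
    twocPHom (q+1) (evP V (q+1)) (evP Ds (q+1)) (jf j (q+1))
      ((jf j (q+1)) ≫ eFstP (q+1) (evP Ds (q+1)) (evP Ds (q+1)) (𝟙 _))
      (eSndP (q+1) (evP Ds (q+1)) (evP Ds (q+1)) (𝟙 _))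
      hcomm_incl hd2_incl with hincl_def
  have hcomm_b : ∀ r : ℝ≥0, (𝟙 (evP Ds (q+1)) : _ ⟶ _).app r ≫
      ((jf v (q+1)) ≫ dP Y (q+1) (q+1+1)).app r =
      (jf v (q+1)).app r ≫ (Y.obj r).d (q+1) (q+1+1) := by
    intro r; simp
  have hd2_b : ∀ r : ℝ≥0, ((jf v (q+1)) ≫ dP Y (q+1) (q+1+1)).app r ≫
      (Y.obj r).d (q+1+1) (q+1+1+1) = 0 := by
    intro r; simp
  set bD : twocP (q+1) (evP Ds (q+1)) (evP Ds (q+1)) (𝟙 _) ⟶ Y :=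
    twocPHom (q+1) (evP Ds (q+1)) (evP Ds (q+1)) (𝟙 _)
      (jf v (q+1)) ((jf v (q+1)) ≫ dP Y (q+1) (q+1+1)) hcomm_b hd2_b with hbD_def
  have hcomm_a : ∀ r : ℝ≥0, (jf j (q+1)).app r ≫ (0 : (evP Ds (q+1)) ⟶ evP X (q+1+1)).app r =
      (jf u (q+1)).app r ≫ (X.obj r).d (q+1) (q+1+1) := by
    intro r
    have hc := (u.app r).comm (q+1) (q+1+1)
    rw [mzero (hVsub r (q+1+1) (by omega) (by omega)) ((V.obj r).d (q+1) (q+1+1)),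
      zero_comp] at hc
    simp [hc]
  have hd2_a : ∀ r : ℝ≥0, (0 : (evP Ds (q+1)) ⟶ evP X (q+1+1)).app r ≫
      (X.obj r).d (q+1+1) (q+1+1+1) = 0 := by
    intro r; simp
  set aX : twocP (q+1) (evP V (q+1)) (evP Ds (q+1)) (jf j (q+1)) ⟶ X :=
    twocPHom (q+1) (evP V (q+1)) (evP Ds (q+1)) (jf j (q+1))
      (jf u (q+1)) 0 hcomm_a hd2_a with haX_def
  -- commutativity of the square
  have hw : aX ≫ f = incl ≫ bD := by
    apply twocPHom_ext
    · intro r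
      have hc : (u.app r).f (q+1) ≫ (f.app r).f (q+1) =
          (j.app r).f (q+1) ≫ (v.app r).f (q+1) := by
        have h0 := congrArg (fun t => HomologicalComplex.Hom.f (NatTrans.app t r) (q+1)) huv
        simpa using h0
      rw [NatTrans.comp_app, NatTrans.comp_app, HomologicalComplex.comp_f,
        HomologicalComplex.comp_f, hincl_def, haX_def, hbD_def,
        twocPHom_app_f_fst, twocPHom_app_f_fst, twocPHom_app_f_fst]
      simp [hc]
    · intro r
      rw [NatTrans.comp_app, NatTrans.comp_app, HomologicalComplex.comp_f,
        HomologicalComplex.comp_f, hincl_def, haX_def, hbD_def,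
        twocPHom_app_f_snd, twocPHom_app_f_snd, twocPHom_app_f_snd]
      have hc := (v.app r).comm (q+1) (q+1+1)
      rw [mzero (hDsub r (q+1+1) (by omega) (by omega)) ((Ds.obj r).d (q+1) (q+1+1)),
        zero_comp] at hc
      simp [hc]
  -- the generating cofibration property
  have hgen : IsSphereDiskIncl
      (twocP (q+1) (evP V (q+1)) (evP Ds (q+1)) (jf j (q+1)))
      (twocP (q+1) (evP Ds (q+1)) (evP Ds (q+1)) (𝟙 _)) s T (q+1+1) incl := by
    refine ⟨?_, ?_, ?_, ?_⟩
    · apply isPSphere_twocP (q+1) (evP V (q+1)) (evP Ds (q+1)) (jf j (q+1)) s T hsT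
      · intro r hr; exact hV1 r hr (q+1)
      · intro r hr; exact hVrank r hr
      · intro r hr; exact hDs.1 r hr (q+1)
      · intro r hr; exact disk_rank_top hDs r hr
      · intro r hr
        haveI := isIso_f_of_isIso (j.app r) (hj r hr) (q+1)
        simp only [jf_app]
        exact bij_of_isIso _ inferInstance
      · intro a b h ha
        exact isIso_f_of_isIso _ (hV3 a b h ha) (q+1)
      · intro a b h ha
        exact isIso_f_of_isIso _ (hDs.2.2 a b h ha) (q+1)
    · apply isPDisk_twocP (q+1) (evP Ds (q+1)) s
      · intro r hr; exact hDs.1 r hr (q+1)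
      · intro r hr; exact disk_rank_top hDs r hr
      · intro a b h ha; exact isIso_f_of_isIso _ (hDs.2.2 a b h ha) (q+1)
    · intro _ r hrs hrT
      rw [hincl_def, twocPHom_app_f_snd]
      simp only [eSndP_app]
      exact (bij_of_isIso _ inferInstance).injective
    · intro r hr
      rw [hincl_def]
      apply ccIso
      intro n
      by_cases hn : n = q + 1
      · subst hn
        rw [twocPHom_app_f_fst]
        haveI := isIso_f_of_isIso (j.app r) (hj r hr) (q+1)
        simp only [NatTrans.comp_app, jf_app, eFstP_app]
        infer_instance
      · by_cases hn1 : n = q + 1 + 1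
        · subst hn1
          rw [twocPHom_app_f_snd]
          simp only [eSndP_app]
          infer_instance
        · exact miso (twoc_sub _ _ _ _ n hn hn1) (twoc_sub _ _ _ _ n hn hn1) _
  have hlp : HasLiftingProperty incl f := hI s T (q+1+1) _ _ incl hsT hgen
  have sq : CommSq aX incl f bD := ⟨hw⟩
  obtain ⟨l2, hfl, hfr⟩ : ∃ l2, incl ≫ l2 = aX ∧ l2 ≫ f = bD := by
    haveI := hlp
    exact ⟨sq.lift, sq.fac_left, sq.fac_right⟩
  -- extract the degree (q+1) component of the lift
  refine ⟨eFstP (q+1) (evP Ds (q+1)) (evP Ds (q+1)) (𝟙 _) ≫ jf l2 (q+1), ?_, ?_, ?_⟩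
  · intro r
    have h0 := congrArg (fun t => HomologicalComplex.Hom.f (NatTrans.app t r) (q+1)) hfl
    simp only [NatTrans.comp_app, HomologicalComplex.comp_f, hincl_def, haX_def,
      twocPHom_app_f_fst, NatTrans.comp_app, jf_app, eFstP_app, Category.assoc] at h0
    erw [HomologicalComplex.comp_f] at h0
    simp only [twocPHom_app_f_fst, NatTrans.comp_app, jf_app, eFstP_app, Category.assoc] at h0
    have h1 := cancel_eqToHom _ h0
    simpa using h1
  · intro r
    have h0 := congrArg (fun t => HomologicalComplex.Hom.f (NatTrans.app t r) (q+1)) hfr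
    simp only [NatTrans.comp_app, HomologicalComplex.comp_f, hbD_def,
      twocPHom_app_f_fst, jf_app] at h0
    simp only [NatTrans.comp_app, jf_app, eFstP_app, Category.assoc, h0]
    simp
  · intro r
    have h2 : (l2.app r).f (q+1+1) = 0 := by
      have h0 := congrArg (fun t => HomologicalComplex.Hom.f (NatTrans.app t r) (q+1+1)) hfl
      simp only [NatTrans.comp_app, HomologicalComplex.comp_f, hincl_def, haX_def,
        twocPHom_app_f_snd, eSndP_app, Category.assoc, Limits.zero_app, comp_zero] at h0
      exact eqToHom_zero_cancel _ (eqToHom_zero_cancel _ h0)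
    have hc := (l2.app r).comm (q+1) (q+1+1)
    show (_ ≫ (l2.app r).f (q+1)) ≫ _ = 0
    rw [Category.assoc, hc]
    show _ ≫ (twoc (q+1) _ _ _).d (q+1) (q+1+1) ≫ _ = 0
    rw [h2, comp_zero, comp_zero]


include hDs hsT hV1 hV2 hV3 hj huv hI in
lemma key : ∃ m : Ds ⟶ X, j ≫ m = u ∧ m ≫ f = v := by
  have hles : ∀ r : ℝ≥0, T ≤ (r : ℝ≥0∞) → s ≤ r := fun r hr => by
    exact_mod_cast le_of_lt (lt_of_lt_of_le hsT hr)
  have hVsub : ∀ (r : ℝ≥0) (n : ℕ), n ≠ q + 1 → n ≠ q → Subsingleton ((V.obj r).X n) := by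
    intro r n h1 h2
    rcases lt_or_ge (r : ℝ≥0∞) T with h | h
    · exact hV1 r h n
    · have hc := hV2 r h
      rw [IsDiskC, if_neg (Nat.succ_ne_zero q)] at hc
      exact hc.2.2.1 n h1 h2
  have hDsub : ∀ (r : ℝ≥0) (n : ℕ), n ≠ q + 1 → n ≠ q → Subsingleton ((Ds.obj r).X n) :=
    fun r n h1 h2 => disk_sub hDs r n h1 h2
  obtain ⟨xi, hxi1, hxi2, hxi3⟩ :=
    liftAux f s q hDs T hsT j hV1 hV2 hV3 hj u v huv hI
  -- the sphere inclusion
  have hcomm_i : ∀ r : ℝ≥0, (dP V q (q+1) ≫ jf j (q+1)).app r ≫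
      (𝟙 (evP Ds (q+1)) : _ ⟶ _).app r =
      (jf j q).app r ≫ (Ds.obj r).d q (q+1) := by
    intro r
    simp only [NatTrans.comp_app, dP_app, jf_app, NatTrans.id_app, Category.comp_id]
    exact ((j.app r).comm q (q+1)).symm
  have hd2_i : ∀ r : ℝ≥0, (𝟙 (evP Ds (q+1)) : _ ⟶ _).app r ≫
      (Ds.obj r).d (q+1) (q+1+1) = 0 := by
    intro r
    rw [mzero (hDsub r (q+1+1) (by omega) (by omega)) ((Ds.obj r).d (q+1) (q+1+1)), comp_zero]
  set ι : twocP q (evP V q) (evP Ds (q+1)) (dP V q (q+1) ≫ jf j (q+1)) ⟶ Ds :=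
    twocPHom q (evP V q) (evP Ds (q+1)) (dP V q (q+1) ≫ jf j (q+1))
      (jf j q) (𝟙 (evP Ds (q+1))) hcomm_i hd2_i with hι_def
  -- the top morphism
  have hcomm_u : ∀ r : ℝ≥0, (dP V q (q+1) ≫ jf j (q+1)).app r ≫ xi.app r =
      (jf u q).app r ≫ (X.obj r).d q (q+1) := by
    intro r
    have hc := (u.app r).comm q (q+1)
    simp only [NatTrans.comp_app, dP_app, jf_app, Category.assoc, hxi1 r, jf_app]
    rw [hc]
  set uS : twocP q (evP V q) (evP Ds (q+1)) (dP V q (q+1) ≫ jf j (q+1)) ⟶ X :=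
    twocPHom q (evP V q) (evP Ds (q+1)) (dP V q (q+1) ≫ jf j (q+1))
      (jf u q) xi (hcomm_u) (fun r => hxi3 r) with huS_def
  -- commutativity
  have hw : uS ≫ f = ι ≫ v := by
    apply twocPHom_ext
    · intro r
      have hc : (u.app r).f q ≫ (f.app r).f q = (j.app r).f q ≫ (v.app r).f q := by
        have h0 := congrArg (fun t => HomologicalComplex.Hom.f (NatTrans.app t r) q) huv
        simpa using h0
      rw [NatTrans.comp_app, NatTrans.comp_app, HomologicalComplex.comp_f,
        HomologicalComplex.comp_f, huS_def, hι_def, twocPHom_app_f_fst, twocPHom_app_f_fst]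
      simp [hc]
    · intro r
      rw [NatTrans.comp_app, NatTrans.comp_app, HomologicalComplex.comp_f,
        HomologicalComplex.comp_f, huS_def, hι_def, twocPHom_app_f_snd, twocPHom_app_f_snd]
      simp [hxi2 r]
  -- generating cofibration
  have hgen : IsSphereDiskIncl
      (twocP q (evP V q) (evP Ds (q+1)) (dP V q (q+1) ≫ jf j (q+1)))
      Ds s T (q+1) ι := by
    refine ⟨?_, hDs, ?_, ?_⟩
    · apply isPSphere_twocP q (evP V q) (evP Ds (q+1)) _ s T hsT
      · intro r hr; exact hV1 r hr q
      · intro r hr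
        have hc := hV2 r hr
        rw [IsDiskC, if_neg (Nat.succ_ne_zero q)] at hc
        exact hc.2.1
      · intro r hr; exact hDs.1 r hr (q+1)
      · intro r hr; exact disk_rank_top hDs r hr
      · intro r hr
        have hc := hV2 r hr
        rw [IsDiskC, if_neg (Nat.succ_ne_zero q)] at hc
        haveI : IsIso ((V.obj r).d q (q+1)) := isIso_of_bij _ hc.2.2.2
        haveI := isIso_f_of_isIso (j.app r) (hj r hr) (q+1)
        simp only [NatTrans.comp_app, dP_app, jf_app]
        exact bij_of_isIso _ inferInstance
      · intro a b h ha
        exact isIso_f_of_isIso _ (hV3 a b h ha) q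
      · intro a b h ha
        exact isIso_f_of_isIso _ (hDs.2.2 a b h ha) (q+1)
    · intro _ r hrs hrT
      rw [hι_def, twocPHom_app_f_snd]
      exact (bij_of_isIso _ inferInstance).injective
    · intro r hr
      rw [hι_def]
      apply ccIso
      intro n
      by_cases hn : n = q
      · subst hn
        rw [twocPHom_app_f_fst]
        haveI := isIso_f_of_isIso (j.app r) (hj r hr) n
        simp only [jf_app]
        infer_instance
      · by_cases hn1 : n = q + 1
        · subst hn1
          rw [twocPHom_app_f_snd]
          infer_instance
        · exact miso (twoc_sub _ _ _ _ n hn hn1) (hDsub r n hn1 hn) _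
  have hlp : HasLiftingProperty ι f := hI s T (q+1) _ _ ι hsT hgen
  have sq : CommSq uS ι f v := ⟨hw⟩
  obtain ⟨mm, hfl, hfr⟩ : ∃ mm, ι ≫ mm = uS ∧ mm ≫ f = v := by
    haveI := hlp
    exact ⟨sq.lift, sq.fac_left, sq.fac_right⟩
  refine ⟨mm, ?_, hfr⟩
  apply NatTrans.ext
  funext r
  apply HomologicalComplex.hom_ext
  intro n
  by_cases hn : n = q
  · subst hn
    have h0 := congrArg (fun t => HomologicalComplex.Hom.f (NatTrans.app t r) n) hfl
    simp only [NatTrans.comp_app, HomologicalComplex.comp_f, hι_def, huS_def,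
      twocPHom_app_f_fst, jf_app, Category.assoc] at h0
    erw [HomologicalComplex.comp_f] at h0
    simp only [twocPHom_app_f_fst, jf_app, Category.assoc] at h0
    have h1 := cancel_eqToHom _ h0
    simpa using h1
  · by_cases hn1 : n = q + 1
    · subst hn1
      have h0 := congrArg (fun t => HomologicalComplex.Hom.f (NatTrans.app t r) (q+1)) hfl
      simp only [NatTrans.comp_app, HomologicalComplex.comp_f, hι_def, huS_def,
        twocPHom_app_f_snd, Category.assoc, Category.id_comp] at h0
      erw [HomologicalComplex.comp_f] at h0
      simp only [twocPHom_app_f_snd, Category.assoc, Category.id_comp] at h0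
      have h1 := cancel_eqToHom _ h0
      simp only [NatTrans.id_app, Category.id_comp] at h1
      show ((j ≫ mm).app r).f (q+1) = (u.app r).f (q+1)
      rw [NatTrans.comp_app, HomologicalComplex.comp_f, h1]
      exact hxi1 r
    · exact mhext (hVsub r n hn1 hn) _ _

end Key
end Stmt15Aux

open Stmt15Aux

/-- every morphism of persistent cochain complexes with the right lifting
property with respect to the generating set
`I = {S_{[s,t)}^k ↪ D_s^k : k ∈ ℕ, 0 ≤ s < t ≤ ∞}` also has the right lifting property
with respect to `J = {D_t^k → D_s^k : 0 ≤ s < t < ∞} ∪ {0 → D_s^k : s ≥ 0}`. -/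
theorem stmt15 (X Y : PCC) (f : X ⟶ Y)
    (hI : ∀ (s : ℝ≥0) (t : ℝ≥0∞) (k : ℕ) (S D : PCC) (i : S ⟶ D),
      (s : ℝ≥0∞) < t → IsSphereDiskIncl S D s t k i → HasLiftingProperty i f) :
    (∀ (s t : ℝ≥0) (k : ℕ) (Dt Ds : PCC) (i : Dt ⟶ Ds), s < t →
      IsDiskIncl Dt Ds s t k i → HasLiftingProperty i f) ∧
    (∀ (s : ℝ≥0) (k : ℕ) (Z D : PCC), IsZeroP Z → IsPDisk D s k →
      ∀ i : Z ⟶ D, HasLiftingProperty i f) := by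
  constructor
  · intro s t k Dt Ds i hst hdi
    obtain ⟨hstle, hDt, hDs, hiso⟩ := hdi
    cases k with
    | zero =>
      constructor
      intro u v sq
      exact ⟨⟨⟨0, pcc_hom_ext (fun r n => disk_sub0 hDt r n) _ _,
        pcc_hom_ext (fun r n => disk_sub0 hDs r n) _ _⟩⟩⟩
    | succ q =>
      constructor
      intro u v sq
      obtain ⟨m, h1, h2⟩ := key f s q hDs (t : ℝ≥0∞)
        (by exact_mod_cast hst) i
        (fun r hr => hDt.1 r (by exact_mod_cast hr))
        (fun r hr => hDt.2.1 r (by exact_mod_cast hr))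
        (fun a b h ha => hDt.2.2 a b h (by exact_mod_cast ha))
        (fun r hr => hiso r (by exact_mod_cast hr))
        u v sq.w hI
      exact ⟨⟨⟨m, h1, h2⟩⟩⟩
  · intro s k Z D hZ hD i0
    cases k with
    | zero =>
      constructor
      intro u v sq
      exact ⟨⟨⟨0, pcc_hom_ext (fun r n => hZ r n) _ _,
        pcc_hom_ext (fun r n => disk_sub0 hD r n) _ _⟩⟩⟩
    | succ q =>
      constructor
      intro u v sq
      obtain ⟨m, h1, h2⟩ := key f s q hD ⊤ ENNReal.coe_lt_top i0
        (fun r _ => hZ r)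
        (fun r hr => absurd hr (not_le.mpr ENNReal.coe_lt_top))
        (fun a b h ha => absurd ha (not_le.mpr ENNReal.coe_lt_top))
        (fun r hr => absurd hr (not_le.mpr ENNReal.coe_lt_top))
        u v sq.w hI
      exact ⟨⟨⟨m, h1, h2⟩⟩⟩
end

section
/- The quotient map q : D_s^k → D_s^k / D_t^k of persistent cochain complexes (for s < t < u and k ≥ 1) is pointwise surjective but does not have the right lifting property with respect to the map D_t^k → D_s^k: the lifting problem given by the zero map D_t^k → D_s^k on top and q : D_s^k → D_s^k/D_t^k on the bottom admits no lift. -/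
open CategoryTheory CategoryTheory.Limits NNReal
open scoped ENNReal

/-- The quotient `D_s^k / D_t^k`: the disk complex `D^k` on `[s,t)`, zero elsewhere. -/
def IsQuotDisk (Q : PCC) (s t : ℝ≥0) (k : ℕ) : Prop :=
  (∀ r : ℝ≥0, r < s ∨ t ≤ r → ∀ n, Subsingleton ((Q.obj r).X n)) ∧
  (∀ r : ℝ≥0, s ≤ r → r < t → IsDiskC (Q.obj r) k) ∧
  (∀ a b : ℝ≥0, ∀ h : a ≤ b, s ≤ a → b < t → IsIso (Q.map (homOfLE h)))

/-- for `s < t < u` and `k ≥ 1`, the quotient map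
`q : D_s^k → D_s^k / D_t^k` is pointwise surjective, but the lifting problem with the
zero map `D_t^k → D_s^k` on top, the inclusion `D_t^k → D_s^k` on the left and `q` on
the right admits no lift; in particular `q` lacks the right lifting property with
respect to `D_t^k → D_s^k`. -/
theorem stmt17 (s t u : ℝ≥0) (hst : s < t) (htu : t < u) (k : ℕ) (hk : 1 ≤ k)
    (Dt Ds Q : PCC) (i : Dt ⟶ Ds) (hi : IsDiskIncl Dt Ds s t k i)
    (q : Ds ⟶ Q) (hQ : IsQuotDisk Q s t k)
    (hq : ∀ r : ℝ≥0, s ≤ r → r < t → IsIso (q.app r)) :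
    (∀ (r : ℝ≥0) (n : ℕ), Function.Surjective ((q.app r).f n)) ∧
    ¬ ∃ l : Ds ⟶ Ds, i ≫ l = 0 ∧ l ≫ q = q := by
  obtain ⟨hw, hDt, hDs, hit⟩ := hi
  refine ⟨?_, ?_⟩
  · intro r n
    rcases lt_or_ge r s with h1 | h1
    · have := hQ.1 r (Or.inl h1) n
      intro y; exact ⟨0, Subsingleton.elim _ _⟩
    · rcases lt_or_ge r t with h2 | h2
      · have h3 : IsIso (q.app r) := hq r h1 h2
        have h4 : IsIso ((HomologicalComplex.eval (ModuleCat ℚ) _ n).map (q.app r)) :=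
          inferInstance
        exact (ConcreteCategory.bijective_of_isIso
          ((HomologicalComplex.eval (ModuleCat ℚ) _ n).map (q.app r))).2
      · have := hQ.1 r (Or.inr h2) n
        intro y; exact ⟨0, Subsingleton.elim _ _⟩
  · rintro ⟨l, hl0, hlq⟩
    have hqs : IsIso (q.app s) := hq s le_rfl hst
    have hls : l.app s = 𝟙 _ := by
      have h := congrArg (fun f => f.app s) hlq
      simp only [NatTrans.comp_app] at h
      exact (cancel_mono (q.app s)).mp (by simpa using h)
    have hlt : l.app t = 0 := by
      have hit' : IsIso (i.app t) := hit t le_rfl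
      have h := congrArg (fun f => f.app t) hl0
      simp only [NatTrans.comp_app] at h
      exact (cancel_epi (i.app t)).mp (by simpa using h)
    have hnat := l.naturality (homOfLE hw)
    rw [hls, hlt, Category.id_comp, comp_zero] at hnat
    have hiso : IsIso (Ds.map (homOfLE hw)) := hDs.2.2 s t hw le_rfl
    have hid : (𝟙 (Ds.obj s) : Ds.obj s ⟶ Ds.obj s) = 0 := by
      have h5 : (0 : Ds.obj s ⟶ Ds.obj t) ≫ inv (Ds.map (homOfLE hw)) = 𝟙 _ := by
        rw [hnat]; exact IsIso.hom_inv_id _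
      rw [← h5, zero_comp]
    have hidk : (𝟙 ((Ds.obj s).X k) : (Ds.obj s).X k ⟶ _) = 0 := by
      have := congrArg (fun f => HomologicalComplex.Hom.f f k) hid
      simpa using this
    have hsub : Subsingleton ((Ds.obj s).X k) := by
      constructor
      intro a b
      calc a = (𝟙 ((Ds.obj s).X k) : _ ⟶ _) a := rfl
        _ = (0 : ((Ds.obj s).X k : Type _)) := by rw [hidk]; rfl
        _ = (𝟙 ((Ds.obj s).X k) : _ ⟶ _) b := by rw [hidk]; rfl
        _ = b := rfl
    have hdisk := hDs.2.1 s le_rfl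
    rw [IsDiskC, if_neg (by omega : k ≠ 0)] at hdisk
    have := hdisk.1
    rw [Module.finrank_zero_of_subsingleton] at this
    exact one_ne_zero this.symm
end

section
/- Let X be a persistent cochain complex and consider a pushout square in persistent cochain complexes attaching a disk along a disk: the pushout of D_s^k ← D_t^k → X (where D_t^k → D_s^k is the canonical inclusion for s ≤ t and D_t^k → X is any map). Then the induced map X → X' to the pushout is a pointwise quasi-isomorphism. -/
open CategoryTheory CategoryTheory.Limits NNReal
open scoped ENNReal

section Aux

lemma isZero_cc (C : CC) (h : ∀ n, Subsingleton (C.X n)) : IsZero C := by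
  rw [IsZero.iff_id_eq_zero]
  apply HomologicalComplex.hom_ext
  intro n
  haveI := h n
  exact (ModuleCat.isZero_of_subsingleton (C.X n)).eq_of_src _ _

lemma exactAt_of_subsingleton (C : CC) (n : ℕ) (h : Subsingleton (C.X n)) :
    C.ExactAt n := by
  rw [HomologicalComplex.exactAt_iff, ShortComplex.moduleCat_exact_iff]
  intro x _
  exact ⟨0, @Subsingleton.elim _ h _ _⟩

lemma disk_exactAt (C : CC) (k : ℕ) (hk : k ≠ 0) (h : IsDiskC C k) (n : ℕ) :
    C.ExactAt n := by
  rw [IsDiskC, if_neg hk] at h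
  obtain ⟨h1, h2, h3, hbij⟩ := h
  obtain ⟨m, rfl⟩ := Nat.exists_eq_succ_of_ne_zero hk
  by_cases hnk : n = m + 1
  · subst hnk
    rw [C.exactAt_iff' m (m + 1) (m + 2)
      (by simp) (by simp [CochainComplex.next]),
      ShortComplex.moduleCat_exact_iff]
    intro x _
    obtain ⟨a, ha⟩ := hbij.2 x
    exact ⟨a, ha⟩
  · by_cases hnk1 : n = m
    · subst hnk1
      rw [C.exactAt_iff' ((ComplexShape.up ℕ).prev n) n (n + 1)
        rfl (by simp [CochainComplex.next]),
        ShortComplex.moduleCat_exact_iff]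
      intro x hx
      refine ⟨0, ?_⟩
      have hx0 : x = 0 := by
        apply hbij.1
        exact hx.trans (map_zero _).symm
      simp [hx0]
    · have : n ≠ (m + 1) - 1 := by omega
      exact exactAt_of_subsingleton _ _ (h3 n hnk (by simpa using this))

lemma isIso_map_biprod_inr {C D : Type*} [Category C] [Category D]
    [Preadditive C] [Preadditive D] [HasBinaryBiproducts C] (F : C ⥤ D) [F.Additive]
    (A B : C) (h : IsZero (F.obj A)) : IsIso (F.map (biprod.inr : B ⟶ A ⊞ B)) := by
  refine ⟨F.map biprod.snd, ?_, ?_⟩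
  · rw [← F.map_comp, biprod.inr_snd, F.map_id]
  · have e : (biprod.snd ≫ biprod.inr : A ⊞ B ⟶ A ⊞ B) = 𝟙 _ - biprod.fst ≫ biprod.inl := by
      rw [eq_sub_iff_add_eq, add_comm]
      exact biprod.total
    rw [← F.map_comp, e, F.map_sub, F.map_id, F.map_comp,
      h.eq_of_src (F.map biprod.inl) 0, comp_zero, sub_zero]

lemma quasiIso_biprod_inr (A B : CC) (hA : ∀ n, A.ExactAt n) :
    QuasiIso (biprod.inr : B ⟶ A ⊞ B) := by
  rw [quasiIso_iff]
  intro n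
  rw [quasiIsoAt_iff_isIso_homologyMap]
  have hz : IsZero ((HomologicalComplex.homologyFunctor (ModuleCat ℚ)
      (ComplexShape.up ℕ) n).obj A) :=
    (HomologicalComplex.exactAt_iff_isZero_homology _ _).1 (hA n)
  exact isIso_map_biprod_inr (HomologicalComplex.homologyFunctor _ _ n) A B hz

lemma quasiIso_pushout_inr_of_isZero {Z A B : CC} (f : Z ⟶ A) (g : Z ⟶ B)
    (hZ : IsZero Z) (hA : ∀ n, A.ExactAt n) : QuasiIso (pushout.inr f g) := by
  have w : f ≫ (biprod.inl : A ⟶ A ⊞ B) = g ≫ biprod.inr := hZ.eq_of_src _ _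
  let c : PushoutCocone f g := PushoutCocone.mk biprod.inl biprod.inr w
  have hc : IsColimit c := PushoutCocone.IsColimit.mk _
    (fun s => biprod.desc s.inl s.inr)
    (fun s => biprod.inl_desc _ _) (fun s => biprod.inr_desc _ _)
    (fun s m h1 h2 => by
      apply biprod.hom_ext' <;> simp [h1, h2])
  let e := colimit.isoColimitCocone ⟨c, hc⟩
  have h1 : pushout.inr f g ≫ e.hom = (biprod.inr : B ⟶ A ⊞ B) :=
    colimit.isoColimitCocone_ι_hom _ _
  rw [← quasiIso_iff_comp_right (pushout.inr f g) e.hom, h1]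
  exact quasiIso_biprod_inr A B hA

end Aux

/-- attaching a disk along a disk is a pointwise quasi-isomorphism: for
the pushout of `D_s^k ← D_t^k → X` (with `D_t^k → D_s^k` the canonical inclusion for
`s ≤ t` and `D_t^k → X` any map), the induced map `X → X'` is a pointwise
quasi-isomorphism. -/
theorem stmt18 (s t : ℝ≥0) (hst : s ≤ t) (k : ℕ) (Dt Ds X : PCC) (i : Dt ⟶ Ds)
    (hi : IsDiskIncl Dt Ds s t k i) (g : Dt ⟶ X) :
    ∀ r : ℝ≥0, QuasiIso ((pushout.inr i g).app r) := by
  obtain ⟨hst', hDt, hDs, hiso⟩ := hi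
  intro r
  let F := (evaluation ℝ≥0 CC).obj r
  have key : QuasiIso (pushout.inr (F.map i) (F.map g)) := by
    by_cases hr : t ≤ r
    · haveI : IsIso (F.map i) := hiso r hr
      infer_instance
    · push_neg at hr
      have hZ : IsZero (Dt.obj r) := isZero_cc _ (hDt.1 r hr)
      apply quasiIso_pushout_inr_of_isZero _ _ hZ
      intro n
      by_cases hs : s ≤ r
      · have hD := hDs.2.1 r hs
        by_cases hk : k = 0
        · rw [IsDiskC, if_pos hk] at hD
          exact exactAt_of_subsingleton _ _ (hD n)
        · exact disk_exactAt _ _ hk hD n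
      · exact exactAt_of_subsingleton _ _ (hDs.1 r (lt_of_not_ge hs) n)
  have h1 : pushout.inr (F.map i) (F.map g) ≫ (PreservesPushout.iso F i g).hom
      = F.map (pushout.inr i g) := PreservesPushout.inr_iso_hom F i g
  have h2 : QuasiIso (F.map (pushout.inr i g)) := by
    rw [← h1, quasiIso_iff_comp_right]
    exact key
  exact h2
end
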